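/- arXiv:1411.4446 — 5 statements merged into one kernel-verified Lean document; each statement's English description precedes it below -/
import Mathlib

section
/- Let f be a homogeneous polynomial of degree d in variables x_0,...,x_n with real coefficients that is strictly positive on the closed first octant minus the origin (i.e., f(x) > 0 whenever all x_i ≥ 0 and x ≠ 0). Then there exists N_0 ∈ ℕ such that for all N ≥ N_0, every monomial of degree d + N in the expansion of (x_0 + ... + x_n)^N · f has a strictly positive coefficient. -/
open MvPolynomial Finset

lemma polya_cast_descFactorial_prod (a k : ℕ) :
    ((a.descFactorial k : ℝ)) = ∏ j ∈ range k, ((a : ℝ) - j) := by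
  by_cases h : a < k
  · rw [Nat.descFactorial_eq_zero_iff_lt.2 h, Nat.cast_zero]
    refine (Finset.prod_eq_zero (Finset.mem_range.2 h) ?_).symm
    simp
  · push_neg at h
    rw [Nat.descFactorial_eq_prod_range, Nat.cast_prod]
    refine Finset.prod_congr rfl fun j hj => ?_
    have : j ≤ a := le_trans (Nat.le_of_lt_succ (Nat.lt_succ_of_lt (mem_range.1 hj))) h
    push_cast [Nat.cast_sub this]
    ring

lemma polya_abs_prod_sub_prod_le {ι : Type*} (s : Finset ι) (u v : ι → ℝ)
    (hu : ∀ i ∈ s, |u i| ≤ 1) (hv : ∀ i ∈ s, |v i| ≤ 1) :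
    |∏ i ∈ s, u i - ∏ i ∈ s, v i| ≤ ∑ i ∈ s, |u i - v i| := by
  induction s using Finset.cons_induction with
  | empty => simp
  | cons a s ha ih =>
    rw [prod_cons, prod_cons, sum_cons]
    have h1 : |∏ i ∈ s, u i| ≤ 1 := by
      rw [abs_prod]; exact Finset.prod_le_one (fun i _ => abs_nonneg _)
        (fun i hi => hu i (mem_cons_of_mem hi))
    have h2 : |v a| ≤ 1 := hv a (mem_cons_self a s)
    calc |u a * ∏ i ∈ s, u i - v a * ∏ i ∈ s, v i|
        = |(u a - v a) * ∏ i ∈ s, u i + v a * (∏ i ∈ s, u i - ∏ i ∈ s, v i)| := by ring_nf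
      _ ≤ |(u a - v a) * ∏ i ∈ s, u i| + |v a * (∏ i ∈ s, u i - ∏ i ∈ s, v i)| := abs_add_le _ _
      _ ≤ |u a - v a| * 1 + 1 * ∑ i ∈ s, |u i - v i| := by
          rw [abs_mul, abs_mul]
          have := ih (fun i hi => hu i (mem_cons_of_mem hi))
              (fun i hi => hv i (mem_cons_of_mem hi))
          exact add_le_add (mul_le_mul_of_nonneg_left h1 (abs_nonneg _))
            (mul_le_mul h2 this (abs_nonneg _) zero_le_one)
      _ = |u a - v a| + ∑ i ∈ s, |u i - v i| := by ring

lemma polya_coeff_sum_X_pow (n N : ℕ) (m : Fin (n+1) →₀ ℕ) :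
    coeff m ((∑ i, (X i : MvPolynomial (Fin (n+1)) ℝ)) ^ N) =
      if (∑ i, m i) = N then (Nat.multinomial univ m : ℝ) else 0 := by
  rw [Finset.sum_pow_eq_sum_piAntidiag]
  rw [coeff_sum]
  have key : ∀ k : Fin (n+1) → ℕ,
      coeff m ((Nat.multinomial univ k : MvPolynomial (Fin (n+1)) ℝ) * ∏ i, X i ^ k i)
        = if k = ⇑m then (Nat.multinomial univ k : ℝ) else 0 := by
    intro k
    have hk : (∏ i, (X i : MvPolynomial (Fin (n+1)) ℝ) ^ k i)
        = monomial (Finsupp.equivFunOnFinite.symm k) 1 := by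
      rw [← prod_X_pow_eq_monomial]
      refine (Finset.prod_subset (Finset.subset_univ _) fun i _ hi => ?_).symm
      have : Finsupp.equivFunOnFinite.symm k i = 0 := by
        simpa [Finsupp.mem_support_iff] using hi
      simp_all
    rw [hk, ← C_eq_coe_nat, coeff_C_mul, coeff_monomial]
    have : Finsupp.equivFunOnFinite.symm k = m ↔ k = ⇑m := by
      rw [Equiv.symm_apply_eq]; simp [Finsupp.equivFunOnFinite, eq_comm]
    by_cases h : k = ⇑m <;> simp [this, h]
  rw [Finset.sum_congr rfl fun k _ => key k, Finset.sum_ite_eq']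
  have hmem : ⇑m ∈ (univ : Finset (Fin (n+1))).piAntidiag N ↔ (∑ i, m i) = N := by
    simp [Finset.mem_piAntidiag]
  by_cases h : (∑ i, m i) = N <;> simp [hmem, h]

lemma polya_nat_term_identity (n : ℕ) (m b : Fin (n+1) →₀ ℕ) (hbm : b ≤ m) :
    Nat.multinomial univ ⇑(m - b) * ∏ i, Nat.factorial (m i) =
      Nat.factorial (∑ i, (m - b) i) * ∏ i, (m i).descFactorial (b i) := by
  have hco : ∀ i, (m - b) i = m i - b i := fun i => Finsupp.tsub_apply m b i
  have hfac : ∀ i, Nat.factorial (m i)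
      = Nat.factorial (m i - b i) * (m i).descFactorial (b i) := fun i =>
    (Nat.factorial_mul_descFactorial (Finsupp.le_def.1 hbm i)).symm
  calc Nat.multinomial univ ⇑(m - b) * ∏ i, Nat.factorial (m i)
      = (∏ i, Nat.factorial ((m - b) i)) * Nat.multinomial univ ⇑(m - b)
          * ∏ i, (m i).descFactorial (b i) := by
        rw [Finset.prod_congr rfl fun i _ => hfac i, Finset.prod_mul_distrib]
        simp_rw [hco]; ring
    _ = Nat.factorial (∑ i, (m - b) i) * ∏ i, (m i).descFactorial (b i) := by
        rw [Nat.multinomial_spec]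

lemma polya_support_sum_eq (n d : ℕ) (f : MvPolynomial (Fin (n+1)) ℝ) (hf : f.IsHomogeneous d)
    {b : Fin (n+1) →₀ ℕ} (hb : b ∈ f.support) : (∑ i, b i) = d := by
  have h1 : (Finsupp.weight 1) b = d := hf (mem_support_iff.1 hb)
  rw [show (1 : Fin (n+1) → ℕ) = fun _ => 1 from rfl, ← Finsupp.degree_eq_weight_one] at h1
  rw [← h1, Finsupp.degree]
  exact (Finset.sum_subset (subset_univ _) (fun i _ hi => by
    simpa [Finsupp.mem_support_iff] using hi)).symm

lemma polya_coeff_formula (n d N : ℕ) (f : MvPolynomial (Fin (n+1)) ℝ) (hf : f.IsHomogeneous d)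
    (m : Fin (n+1) →₀ ℕ) (hm : (∑ i, m i) = d + N) :
    coeff m ((∑ i, (X i : MvPolynomial (Fin (n+1)) ℝ)) ^ N * f)
        * ∏ i, (Nat.factorial (m i) : ℝ)
      = (Nat.factorial N : ℝ) *
        ∑ b ∈ f.support, coeff b f * ∏ i, ((m i).descFactorial (b i) : ℝ) := by
  conv_lhs => rw [← f.support_sum_monomial_coeff, Finset.mul_sum, coeff_sum]
  rw [Finset.sum_mul, Finset.mul_sum]
  refine Finset.sum_congr rfl fun b hb => ?_
  rw [coeff_mul_monomial']
  by_cases hbm : b ≤ m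
  · have hsum : (∑ i, (m - b) i) = N := by
      have : ∀ i, (m - b) i = m i - b i := fun i => Finsupp.tsub_apply m b i
      simp_rw [this]
      have h2 : ∑ x, (m x - b x) + ∑ x, b x = ∑ x, m x := by
        rw [← Finset.sum_add_distrib]
        exact Finset.sum_congr rfl fun i _ => Nat.sub_add_cancel (Finsupp.le_def.1 hbm i)
      have h3 := polya_support_sum_eq n d f hf hb
      omega
    rw [if_pos hbm, polya_coeff_sum_X_pow, if_pos hsum]
    have this : (Nat.multinomial univ ⇑(m - b) : ℝ) * ∏ i, (Nat.factorial (m i) : ℝ)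
        = (Nat.factorial N : ℝ) * ∏ i, ((m i).descFactorial (b i) : ℝ) := by
      have h := polya_nat_term_identity n m b hbm
      rw [hsum] at h
      exact_mod_cast congrArg (fun x : ℕ => (x : ℝ)) h
    calc (Nat.multinomial univ ⇑(m - b) : ℝ) * coeff b f * ∏ i, (Nat.factorial (m i) : ℝ)
        = coeff b f * ((Nat.multinomial univ ⇑(m - b) : ℝ) * ∏ i, (Nat.factorial (m i) : ℝ)) := by
          ring
      _ = _ := by rw [this]; ring
  · rw [if_neg hbm, zero_mul]
    obtain ⟨i, hi⟩ : ∃ i, m i < b i := by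
      by_contra h; push_neg at h; exact hbm (Finsupp.le_def.2 h)
    have : ((m i).descFactorial (b i) : ℝ) = 0 := by
      rw [Nat.descFactorial_eq_zero_iff_lt.2 hi, Nat.cast_zero]
    rw [Finset.prod_eq_zero (mem_univ i) this, mul_zero, mul_zero]

lemma polya_desc_eq (n d : ℕ) (m b : Fin (n+1) →₀ ℕ) (hb : (∑ i, b i) = d)
    (t : ℝ) (ht : t ≠ 0) :
    ∏ i, ((m i).descFactorial (b i) : ℝ)
      = t ^ d * ∏ i, ∏ j ∈ Finset.range (b i), ((m i : ℝ)/t - j/t) := by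
  rw [Finset.prod_congr rfl (fun i _ => polya_cast_descFactorial_prod (m i) (b i)),
    ← hb, ← Finset.prod_pow_eq_pow_sum, ← Finset.prod_mul_distrib]
  refine Finset.prod_congr rfl fun i _ => ?_
  calc ∏ j ∈ range (b i), ((m i : ℝ) - j)
      = ∏ j ∈ range (b i), (t * ((m i : ℝ)/t - j/t)) :=
        Finset.prod_congr rfl fun j _ => by field_simp
    _ = t ^ (b i) * ∏ j ∈ range (b i), ((m i : ℝ)/t - j/t) := by
        rw [Finset.prod_mul_distrib, Finset.prod_const, Finset.card_range]

lemma polya_est (n d : ℕ) (b : Fin (n+1) →₀ ℕ) (hb : (∑ i, b i) = d) (y : Fin (n+1) → ℝ)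
    (hy0 : ∀ i, 0 ≤ y i) (hy1 : ∀ i, y i ≤ 1) (t : ℝ) (htd : (d:ℝ) ≤ t) (ht : 0 < t) :
    |(∏ i, ∏ j ∈ Finset.range (b i), (y i - j/t)) - ∏ i, y i ^ b i| ≤ d^2 / t := by
  have hbd : ∀ i, b i ≤ d := fun i => hb ▸ Finset.single_le_sum
    (fun i _ => Nat.zero_le _) (mem_univ i)
  have h1 : (∏ p ∈ univ.sigma (fun i => range (b i)), (y p.1 - (p.2:ℝ)/t))
      = ∏ i, ∏ j ∈ Finset.range (b i), (y i - (j:ℝ)/t) :=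
    Finset.prod_sigma _ _ _
  have h2 : (∏ p ∈ univ.sigma (fun i => range (b i)), y p.1)
      = ∏ i, y i ^ b i := by
    rw [Finset.prod_sigma]
    exact Finset.prod_congr rfl fun i _ => by
      simp only []
      rw [Finset.prod_const, Finset.card_range]
  have hcard : (univ.sigma (fun i : Fin (n+1) => range (b i))).card = d := by
    rw [Finset.card_sigma]
    simpa using hb
  rw [← h1, ← h2]
  have hj : ∀ p ∈ univ.sigma (fun i : Fin (n+1) => range (b i)),
      (p.2 : ℝ) ≤ d ∧ 0 ≤ (p.2 : ℝ) ∧ (p.2:ℝ)/t ≤ 1 := by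
    intro p hp
    have hp2 : p.2 < b p.1 := by simpa [Finset.mem_sigma] using hp
    have h3 : (p.2 : ℝ) ≤ d := by
      have : p.2 ≤ d := le_trans (Nat.le_of_lt hp2) (hbd p.1)
      exact_mod_cast this
    exact ⟨h3, Nat.cast_nonneg _, (div_le_one ht).2 (le_trans h3 htd)⟩
  refine le_trans (polya_abs_prod_sub_prod_le _ _ _ ?_ ?_) ?_
  · intro p hp
    obtain ⟨h3, h4, h5⟩ := hj p hp
    rw [abs_le]
    constructor
    · have : 0 ≤ y p.1 := hy0 p.1
      linarith
    · have h6 : 0 ≤ (p.2:ℝ)/t := div_nonneg h4 ht.le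
      have := hy1 p.1
      linarith
  · intro p _
    rw [abs_le]
    exact ⟨by linarith [hy0 p.1], hy1 p.1⟩
  · have heach : ∀ p ∈ univ.sigma (fun i : Fin (n+1) => range (b i)),
        |y p.1 - (p.2:ℝ)/t - y p.1| ≤ (d:ℝ)/t := by
      intro p hp
      obtain ⟨h3, h4, _⟩ := hj p hp
      have heq : y p.1 - (p.2:ℝ)/t - y p.1 = -((p.2:ℝ)/t) := by ring
      rw [heq, abs_neg, abs_of_nonneg (div_nonneg h4 ht.le)]
      gcongr
    calc ∑ p ∈ univ.sigma (fun i : Fin (n+1) => range (b i)), |y p.1 - (p.2:ℝ)/t - y p.1|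
        ≤ ∑ p ∈ univ.sigma (fun i : Fin (n+1) => range (b i)), (d:ℝ)/t :=
          Finset.sum_le_sum heach
      _ = d * ((d:ℝ)/t) := by rw [Finset.sum_const, hcard, nsmul_eq_mul]
      _ = d^2/t := by ring

/-- **Pólya's theorem.** If a homogeneous polynomial `f` of degree `d` is strictly
positive on the closed first octant minus the origin, then for all sufficiently
large `N`, every monomial of degree `d + N` in `(x_0 + ⋯ + x_n)^N * f` has a
strictly positive coefficient. -/
theorem polya (n d : ℕ) (f : MvPolynomial (Fin (n + 1)) ℝ)
    (hf : f.IsHomogeneous d)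
    (hpos : ∀ x : Fin (n + 1) → ℝ, (∀ i, 0 ≤ x i) → x ≠ 0 → 0 < eval x f) :
    ∃ N₀ : ℕ, ∀ N ≥ N₀, ∀ m : Fin (n + 1) →₀ ℕ, (∑ i, m i) = d + N →
      0 < coeff m ((∑ i, (X i : MvPolynomial (Fin (n + 1)) ℝ)) ^ N * f) := by
  classical
  have hne : (stdSimplex ℝ (Fin (n+1))).Nonempty := by
    refine ⟨fun _ => ((n:ℝ)+1)⁻¹, fun _ => by positivity, ?_⟩
    rw [Finset.sum_const, Finset.card_univ, Fintype.card_fin, nsmul_eq_mul]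
    push_cast
    field_simp
  obtain ⟨y₀, hy₀, hmin⟩ := (isCompact_stdSimplex ℝ (Fin (n+1))).exists_isMinOn hne
    (MvPolynomial.continuous_eval (p := f)).continuousOn
  have hy₀ne : y₀ ≠ 0 := by
    intro h
    have := hy₀.2
    rw [h] at this
    simp at this
  set ε := eval y₀ f with hεdef
  have hε : 0 < ε := hpos y₀ hy₀.1 hy₀ne
  set C := ∑ b ∈ f.support, |coeff b f| with hCdef
  have hC : 0 ≤ C := Finset.sum_nonneg fun b _ => abs_nonneg _
  refine ⟨max 1 (⌊C * d^2 / ε⌋₊ + 1), fun N hN m hm => ?_⟩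
  have hN1 : 1 ≤ N := le_trans (le_max_left _ _) hN
  set t : ℝ := ((d + N : ℕ) : ℝ) with htdef
  have ht : 0 < t := by
    rw [htdef]
    have : 0 < d + N := by omega
    exact_mod_cast this
  have htd : (d:ℝ) ≤ t := by
    rw [htdef]
    have : d ≤ d + N := Nat.le_add_right d N
    exact_mod_cast this
  have htC : C * d^2 / ε < t := by
    have h5 : (⌊C * d^2 / ε⌋₊ + 1 : ℕ) ≤ N := le_trans (le_max_right _ _) hN
    have h6 : ((⌊C * d^2 / ε⌋₊ + 1 : ℕ) : ℝ) ≤ t := by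
      rw [htdef]
      have : (⌊C * d^2 / ε⌋₊ + 1 : ℕ) ≤ d + N := by omega
      exact_mod_cast this
    calc C * d^2 / ε < ⌊C * d^2 / ε⌋₊ + 1 := Nat.lt_floor_add_one _
      _ ≤ t := by push_cast at h6 ⊢; linarith
  have hmi : ∀ i, (m i : ℝ) ≤ t := by
    intro i
    have : m i ≤ d + N := hm ▸ Finset.single_le_sum
      (fun i _ => Nat.zero_le (m i)) (mem_univ i)
    rw [htdef]
    exact_mod_cast this
  set y : Fin (n+1) → ℝ := fun i => (m i : ℝ) / t with hydef
  have hy0 : ∀ i, 0 ≤ y i := fun i => div_nonneg (Nat.cast_nonneg _) ht.le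
  have hy1 : ∀ i, y i ≤ 1 := fun i => (div_le_one ht).2 (hmi i)
  have hymem : y ∈ stdSimplex ℝ (Fin (n+1)) := by
    refine ⟨hy0, ?_⟩
    rw [hydef]
    rw [← Finset.sum_div]
    have : (∑ i, (m i : ℝ)) = t := by
      rw [htdef]
      exact_mod_cast hm
    rw [this, div_self ht.ne']
  have hεy : ε ≤ eval y f := hmin hymem
  set S := ∑ b ∈ f.support, coeff b f * ∏ i, ∏ j ∈ range (b i), (y i - (j:ℝ)/t) with hSdef
  have hSerr : |S - eval y f| ≤ C * d^2 / t := by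
    rw [eval_eq', hSdef, ← Finset.sum_sub_distrib]
    refine le_trans (Finset.abs_sum_le_sum_abs _ _) ?_
    have hterm : ∀ b ∈ f.support,
        |coeff b f * ∏ i, ∏ j ∈ range (b i), (y i - (j:ℝ)/t)
          - coeff b f * ∏ i, y i ^ b i| ≤ |coeff b f| * ((d:ℝ)^2/t) := by
      intro b hb
      rw [← mul_sub, abs_mul]
      exact mul_le_mul_of_nonneg_left
        (polya_est n d b (polya_support_sum_eq n d f hf hb) y hy0 hy1 t htd ht)
        (abs_nonneg _)
    refine le_trans (Finset.sum_le_sum hterm) (le_of_eq ?_)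
    rw [← Finset.sum_mul, ← hCdef]
    ring
  have herr_lt : C * d^2 / t < ε := by
    rw [div_lt_iff₀ ht]
    have h7 := mul_lt_mul_of_pos_left htC hε
    have h8 : ε * (C * d^2 / ε) = C * d^2 := by field_simp
    rw [h8] at h7
    linarith
  have hS : 0 < S := by
    have h9 := (abs_le.1 hSerr).1
    linarith
  have hform := polya_coeff_formula n d N f hf m hm
  have hdesc : (∑ b ∈ f.support, coeff b f * ∏ i, ((m i).descFactorial (b i) : ℝ))
      = t^d * S := by
    rw [hSdef, Finset.mul_sum]
    refine Finset.sum_congr rfl fun b hb => ?_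
    rw [polya_desc_eq n d m b (polya_support_sum_eq n d f hf hb) t ht.ne']
    ring
  rw [hdesc] at hform
  have hfactpos : 0 < ∏ i, (Nat.factorial (m i) : ℝ) :=
    Finset.prod_pos fun i _ => by exact_mod_cast Nat.factorial_pos (m i)
  have hposmul : 0 < coeff m ((∑ i, (X i : MvPolynomial (Fin (n + 1)) ℝ)) ^ N * f)
      * ∏ i, (Nat.factorial (m i) : ℝ) := by
    rw [hform]
    exact mul_pos (by exact_mod_cast Nat.factorial_pos N) (mul_pos (pow_pos ht d) hS)
  by_contra hcon
  push_neg at hcon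
  nlinarith
end

section
/- Let f ∈ ℝ[x_0,...,x_n] be a homogeneous polynomial of even degree 2d which is strictly positive on ℝ^{n+1} \ {0}. Then there exist sums of squares of polynomials M_1, R_1, M_2, R_2, each strictly positive away from the origin, such that M_1 and M_2 are sums of squares of monomials and (M_2 + R_2) · f = M_1 + R_1. -/
open MvPolynomial

/-- A sum of squares of polynomials. -/
def IsSOS {σ : Type*} (p : MvPolynomial σ ℝ) : Prop :=
  ∃ (k : ℕ) (q : Fin k → MvPolynomial σ ℝ), p = ∑ i, (q i) ^ 2

/-- A sum of squares of monomials. -/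
def IsMonomialSOS {σ : Type*} (p : MvPolynomial σ ℝ) : Prop :=
  ∃ (k : ℕ) (a : Fin k → ℝ) (m : Fin k → (σ →₀ ℕ)),
    p = ∑ i, (monomial (m i) (a i)) ^ 2

namespace HabichtAux
set_option linter.unusedSectionVars false
set_option maxHeartbeats 1000000


variable {σ : Type*}

lemma _root_.IsSOS.add {p q : MvPolynomial σ ℝ} (hp : IsSOS p) (hq : IsSOS q) : IsSOS (p + q) := by
  obtain ⟨k, u, rfl⟩ := hp
  obtain ⟨l, v, rfl⟩ := hq
  refine ⟨k + l, Fin.addCases u v, ?_⟩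
  rw [Fin.sum_univ_add]
  simp

lemma _root_.IsSOS.mul {p q : MvPolynomial σ ℝ} (hp : IsSOS p) (hq : IsSOS q) : IsSOS (p * q) := by
  obtain ⟨k, u, rfl⟩ := hp
  obtain ⟨l, v, rfl⟩ := hq
  refine ⟨k * l, fun m => u (finProdFinEquiv.symm m).1 * v (finProdFinEquiv.symm m).2, ?_⟩
  rw [Finset.sum_mul_sum]
  rw [Equiv.sum_comp (finProdFinEquiv.symm)
    (fun p : Fin k × Fin l => (u p.1 * v p.2) ^ 2)]
  rw [Fintype.sum_prod_type]
  simp [mul_pow]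

lemma _root_.IsSOS.sq_mul {p : MvPolynomial σ ℝ} (q : MvPolynomial σ ℝ) (hp : IsSOS p) :
    IsSOS (q ^ 2 * p) := by
  obtain ⟨k, u, rfl⟩ := hp
  exact ⟨k, fun i => q * u i, by rw [Finset.mul_sum]; simp [mul_pow]⟩

lemma _root_.IsMonomialSOS.isSOS {p : MvPolynomial σ ℝ} (hp : IsMonomialSOS p) : IsSOS p := by
  obtain ⟨k, a, m, rfl⟩ := hp
  exact ⟨k, fun i => monomial (m i) (a i), rfl⟩

lemma _root_.IsMonomialSOS.mul {p q : MvPolynomial σ ℝ} (hp : IsMonomialSOS p) (hq : IsMonomialSOS q) :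
    IsMonomialSOS (p * q) := by
  obtain ⟨k, a, m, rfl⟩ := hp
  obtain ⟨l, b, w, rfl⟩ := hq
  refine ⟨k * l, fun i => a (finProdFinEquiv.symm i).1 * b (finProdFinEquiv.symm i).2,
    fun i => m (finProdFinEquiv.symm i).1 + w (finProdFinEquiv.symm i).2, ?_⟩
  rw [Finset.sum_mul_sum]
  rw [Equiv.sum_comp (finProdFinEquiv.symm)
    (fun p : Fin k × Fin l => (monomial (m p.1 + w p.2) (a p.1 * b p.2)) ^ 2)]
  rw [Fintype.sum_prod_type]
  refine Finset.sum_congr rfl fun i _ => Finset.sum_congr rfl fun j _ => ?_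
  rw [← mul_pow, monomial_mul]

lemma _root_.IsSOS.eval_nonneg {p : MvPolynomial σ ℝ} (hp : IsSOS p) (x : σ → ℝ) :
    0 ≤ eval x p := by
  obtain ⟨k, u, rfl⟩ := hp
  rw [map_sum]
  exact Finset.sum_nonneg fun i _ => by rw [map_pow]; positivity




variable {σ : Type*} [Fintype σ] [DecidableEq σ]

lemma aeval_eq_eval' (x : σ → ℝ) (p : MvPolynomial σ ℝ) :
    (aeval x : MvPolynomial σ ℝ →ₐ[ℝ] ℝ) p = eval x p := by
  rw [aeval_def, eval, eval₂Hom_congr rfl rfl rfl]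
  rfl

/-- The algebra endomorphism flipping the sign of variable `i`. -/
noncomputable def flip (i : σ) : MvPolynomial σ ℝ →ₐ[ℝ] MvPolynomial σ ℝ :=
  aeval (fun j => if j = i then -X j else X j)

lemma flip_X (i j : σ) : flip i (X j) = if j = i then -X j else X j := by
  simp [flip]

lemma flip_flip (i : σ) (p : MvPolynomial σ ℝ) : flip i (flip i p) = p := by
  have : (flip i).comp (flip i) = AlgHom.id ℝ (MvPolynomial σ ℝ) := by
    apply algHom_ext
    intro j
    by_cases h : j = i <;> simp [flip, h]
  calc flip i (flip i p) = ((flip i).comp (flip i)) p := rfl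
    _ = p := by rw [this]; rfl

lemma flip_comm (i j : σ) (p : MvPolynomial σ ℝ) :
    flip i (flip j p) = flip j (flip i p) := by
  have : (flip i).comp (flip j) = (flip j).comp (flip i) := by
    apply algHom_ext
    intro k
    by_cases h1 : k = j <;> by_cases h2 : k = i <;>
      subst_vars <;> simp [flip] <;> split <;> simp_all
  calc flip i (flip j p) = ((flip i).comp (flip j)) p := rfl
    _ = ((flip j).comp (flip i)) p := by rw [this]
    _ = _ := rfl

/-- flipping a coordinate of a point of `ℝ^σ`. -/
def flipPt (i : σ) (x : σ → ℝ) : σ → ℝ := fun j => if j = i then -x j else x j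

lemma flipPt_ne_zero {i : σ} {x : σ → ℝ} (hx : x ≠ 0) : flipPt i x ≠ 0 := by
  intro h
  apply hx
  funext j
  have := congrFun h j
  by_cases hj : j = i
  · simp [flipPt, hj] at this; simpa [hj] using this
  · simpa [flipPt, hj] using this

lemma eval_flip (i : σ) (x : σ → ℝ) (p : MvPolynomial σ ℝ) :
    eval x (flip i p) = eval (flipPt i x) p := by
  have : (aeval x : MvPolynomial σ ℝ →ₐ[ℝ] ℝ).comp (flip i) = aeval (flipPt i x) := by
    apply algHom_ext
    intro j
    by_cases h : j = i <;> simp [flip, flipPt, h]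
  calc eval x (flip i p) = ((aeval x : MvPolynomial σ ℝ →ₐ[ℝ] ℝ).comp (flip i)) p := by
        rw [AlgHom.comp_apply, aeval_eq_eval']
    _ = aeval (flipPt i x) p := by rw [this]
    _ = eval (flipPt i x) p := aeval_eq_eval' _ _

lemma monomial_eq_prod_univ (γ : σ →₀ ℕ) : (monomial γ (1 : ℝ)) = ∏ j : σ, X j ^ γ j := by
  rw [← prod_X_pow_eq_monomial]
  exact Finset.prod_subset (Finset.subset_univ _) (fun x _ hx => by
    rw [Finsupp.notMem_support_iff.mp hx, pow_zero])

lemma flip_monomial (i : σ) (γ : σ →₀ ℕ) (a : ℝ) :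
    flip i (monomial γ a) = monomial γ ((-1) ^ (γ i) * a) := by
  have h1 : (monomial γ a) = C a * monomial γ (1:ℝ) := by rw [C_mul_monomial, mul_one]
  rw [h1, map_mul]
  have h2 : flip i (C a) = C a := by simp [flip]
  rw [h2, monomial_eq_prod_univ, map_prod]
  have h3 : ∀ j : σ, flip i (X j ^ γ j) = ((if j = i then (-1 : MvPolynomial σ ℝ) else 1) ^ γ j) * X j ^ γ j := by
    intro j
    rw [map_pow, flip_X]
    by_cases h : j = i
    · simp only [h, if_pos]
      rw [neg_pow (X i : MvPolynomial σ ℝ) (γ i)]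
    · simp [h]
  simp_rw [h3]
  rw [Finset.prod_mul_distrib]
  have h4 : (∏ j : σ, (if j = i then (-1 : MvPolynomial σ ℝ) else 1) ^ γ j) = (-1) ^ γ i := by
    rw [Finset.prod_eq_single i]
    · simp
    · intro b _ hb; simp [hb]
    · intro h; exact absurd (Finset.mem_univ i) h
  rw [h4, ← monomial_eq_prod_univ]
  have h5 : ((-1 : MvPolynomial σ ℝ)) ^ γ i = C ((-1 : ℝ) ^ γ i) := by
    rw [map_pow, map_neg, map_one]
  rw [h5, ← mul_assoc, ← C_mul, C_mul_monomial]
  congr 1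
  ring

lemma coeff_flip (i : σ) (p : MvPolynomial σ ℝ) (β : σ →₀ ℕ) :
    coeff β (flip i p) = (-1) ^ (β i) * coeff β p := by
  conv_lhs => rw [← support_sum_monomial_coeff p]
  rw [map_sum, coeff_sum]
  simp_rw [flip_monomial, coeff_monomial]
  rw [Finset.sum_ite_eq' p.support β (fun β => (-1) ^ (β i) * coeff β p)]
  by_cases h : β ∈ p.support
  · simp [h]
  · simp [h, MvPolynomial.notMem_support_iff.mp h]

lemma even_of_flip {i : σ} {p : MvPolynomial σ ℝ} (h : flip i p = p) :
    ∀ β ∈ p.support, Even (β i) := by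
  intro β hβ
  by_contra hodd
  have h1 : coeff β p = (-1) ^ (β i) * coeff β p := by
    conv_lhs => rw [← h, coeff_flip]
  rw [(Nat.not_even_iff_odd.mp hodd).neg_one_pow, neg_one_mul] at h1
  have : coeff β p = 0 := by linarith
  exact (MvPolynomial.mem_support_iff.mp hβ) this

lemma flip_isHomogeneous {i : σ} {p : MvPolynomial σ ℝ} {m : ℕ} (h : p.IsHomogeneous m) :
    (flip i p).IsHomogeneous m := by
  intro d hd
  apply h
  rw [coeff_flip] at hd
  intro h0
  rw [h0, mul_zero] at hd
  exact hd rfl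




/-- `δ^a ≤ δ.descFactorial a + a^2 * D^(a-1)` for `δ ≤ D`. -/
lemma pow_le_descFactorial_add (D : ℕ) : ∀ (a δ : ℕ), δ ≤ D →
    δ ^ a ≤ δ.descFactorial a + a ^ 2 * D ^ (a - 1)
  | 0, δ, _ => by simp
  | (a+1), δ, hδ => by
    have IH := pow_le_descFactorial_add D a δ hδ
    have h2 : δ * δ ^ a ≤ δ * (δ.descFactorial a + a ^ 2 * D ^ (a - 1)) :=
      Nat.mul_le_mul_left δ IH
    have h3 : δ * (a ^ 2 * D ^ (a - 1)) ≤ a ^ 2 * D ^ a := by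
      rcases a with _ | b
      · simp
      · have : δ * ((b+1) ^ 2 * D ^ (b + 1 - 1)) = (b+1)^2 * (δ * D ^ b) := by
          simp only [Nat.add_sub_cancel]; ring
        rw [this]
        have : (b+1)^2 * (δ * D ^ b) ≤ (b+1)^2 * (D * D ^ b) :=
          Nat.mul_le_mul_left _ (Nat.mul_le_mul_right _ hδ)
        calc (b+1)^2 * (δ * D ^ b) ≤ (b+1)^2 * (D * D ^ b) := this
          _ = (b+1)^2 * D ^ (b+1) := by rw [← pow_succ']
    have h4 : δ * δ.descFactorial a ≤ (δ - a) * δ.descFactorial a + a * δ.descFactorial a := by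
      have : δ ≤ (δ - a) + a := by omega
      calc δ * δ.descFactorial a ≤ ((δ - a) + a) * δ.descFactorial a :=
            Nat.mul_le_mul_right _ this
        _ = (δ - a) * δ.descFactorial a + a * δ.descFactorial a := by ring
    have h5 : (δ - a) * δ.descFactorial a = δ.descFactorial (a+1) :=
      (Nat.descFactorial_succ δ a).symm
    have h6 : a * δ.descFactorial a ≤ a * D ^ a := by
      have := Nat.descFactorial_le_pow δ a
      have hp : δ ^ a ≤ D ^ a := Nat.pow_le_pow_left hδ a
      exact Nat.mul_le_mul_left a (le_trans this hp)
    have h7 : a * D ^ a + a ^ 2 * D ^ a ≤ (a+1) ^ 2 * D ^ (a + 1 - 1) := by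
      simp only [Nat.add_sub_cancel]
      have : a + a^2 ≤ (a+1)^2 := by nlinarith
      calc a * D ^ a + a ^ 2 * D ^ a = (a + a^2) * D ^ a := by ring
        _ ≤ (a+1)^2 * D ^ a := Nat.mul_le_mul_right _ this
    calc δ ^ (a+1) = δ * δ ^ a := by ring
      _ ≤ δ * δ.descFactorial a + δ * (a ^ 2 * D ^ (a-1)) := by rw [← Nat.mul_add]; exact h2
      _ ≤ ((δ - a) * δ.descFactorial a + a * δ.descFactorial a) + a ^ 2 * D ^ a :=
          Nat.add_le_add h4 h3
      _ ≤ (δ.descFactorial (a+1) + a * D ^ a) + a ^ 2 * D ^ a := by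
          rw [h5]; exact Nat.add_le_add_right (Nat.add_le_add_left h6 _) _
      _ = δ.descFactorial (a+1) + (a * D ^ a + a ^ 2 * D ^ a) := by ring
      _ ≤ δ.descFactorial (a+1) + (a+1) ^ 2 * D ^ (a + 1 - 1) := Nat.add_le_add_left h7 _

/-- real version, scaled: `(δ/D)^a - desc δ a / D^a ≤ a^2 / D`. -/
lemma desc_ratio_bound {D : ℕ} (hD : 0 < D) (a δ : ℕ) (hδ : δ ≤ D) :
    ((δ : ℝ) / D) ^ a - (δ.descFactorial a : ℝ) / (D : ℝ) ^ a ≤ (a : ℝ) ^ 2 / D := by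
  have hDR : (0 : ℝ) < (D : ℝ) := by exact_mod_cast hD
  have hDa : (0 : ℝ) < (D : ℝ) ^ a := pow_pos hDR a
  rw [div_pow, div_sub_div_same, div_le_div_iff₀ hDa hDR]
  have key : (δ : ℝ) ^ a - (δ.descFactorial a : ℝ) ≤ (a : ℝ) ^ 2 * (D : ℝ) ^ (a - 1) := by
    have := pow_le_descFactorial_add D a δ hδ
    have h2 : (δ : ℝ) ^ a ≤ (δ.descFactorial a : ℝ) + (a : ℝ) ^ 2 * (D : ℝ) ^ (a - 1) := by
      exact_mod_cast this
    linarith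
  calc ((δ:ℝ) ^ a - (δ.descFactorial a : ℝ)) * (D : ℝ)
      ≤ ((a : ℝ) ^ 2 * (D : ℝ) ^ (a - 1)) * (D : ℝ) := by
        apply mul_le_mul_of_nonneg_right key hDR.le
    _ ≤ (a : ℝ) ^ 2 * (D : ℝ) ^ a := by
        rcases a with _ | b
        · simp
        · simp only [Nat.add_sub_cancel]
          rw [mul_assoc, ← pow_succ]
    _ = (a : ℝ) ^ 2 * (D : ℝ) ^ a := rfl

/-- products of reals in `[0,1]`: `∏ p - ∏ q ≤ ∑ (p - q)`. -/
lemma prod_sub_prod_le {ι : Type*} (s : Finset ι) (p q : ι → ℝ)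
    (h0 : ∀ i ∈ s, 0 ≤ q i) (h1 : ∀ i ∈ s, q i ≤ p i) (h2 : ∀ i ∈ s, p i ≤ 1) :
    ∏ i ∈ s, p i - ∏ i ∈ s, q i ≤ ∑ i ∈ s, (p i - q i) := by
  induction s using Finset.cons_induction with
  | empty => simp
  | cons a s ha IH =>
    rw [Finset.prod_cons, Finset.prod_cons, Finset.sum_cons]
    have hqs : 0 ≤ ∏ i ∈ s, q i := Finset.prod_nonneg (fun i hi => h0 i (Finset.mem_cons.mpr (Or.inr hi)))
    have hps : ∏ i ∈ s, p i ≤ 1 := Finset.prod_le_one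
      (fun i hi => le_trans (h0 i (Finset.mem_cons.mpr (Or.inr hi))) (h1 i (Finset.mem_cons.mpr (Or.inr hi))))
      (fun i hi => h2 i (Finset.mem_cons.mpr (Or.inr hi)))
    have hpa1 : p a ≤ 1 := h2 a (Finset.mem_cons_self a s)
    have hqa : 0 ≤ q a := h0 a (Finset.mem_cons_self a s)
    have hqpa : q a ≤ p a := h1 a (Finset.mem_cons_self a s)
    have IH' := IH (fun i hi => h0 i (Finset.mem_cons.mpr (Or.inr hi)))
      (fun i hi => h1 i (Finset.mem_cons.mpr (Or.inr hi)))
      (fun i hi => h2 i (Finset.mem_cons.mpr (Or.inr hi)))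
    have hqsps : ∏ i ∈ s, q i ≤ ∏ i ∈ s, p i := Finset.prod_le_prod
      (fun i hi => h0 i (Finset.mem_cons.mpr (Or.inr hi)))
      (fun i hi => h1 i (Finset.mem_cons.mpr (Or.inr hi)))
    nlinarith

variable {n : ℕ}

/-- the quadratic form `Q = ∑ xᵢ²`. -/
noncomputable def Q (n : ℕ) : MvPolynomial (Fin (n+1)) ℝ := ∑ i, (X i) ^ 2

lemma prod_X_pow_univ (γ : Fin (n+1) →₀ ℕ) :
    ∏ j, (X j : MvPolynomial (Fin (n+1)) ℝ) ^ γ j = monomial γ (1 : ℝ) := by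
  rw [← prod_X_pow_eq_monomial]
  exact (Finset.prod_subset (Finset.subset_univ _) (fun x _ hx => by
    rw [Finsupp.notMem_support_iff.mp hx, pow_zero])).symm

lemma coeff_Q_pow (N : ℕ) (γ : Fin (n+1) →₀ ℕ) (hγ : (∑ i, γ i) = N) :
    coeff (2 • γ) ((Q n) ^ N) = (Nat.multinomial Finset.univ (fun i => γ i) : ℝ) := by
  rw [Q, Finset.sum_pow_eq_sum_piAntidiag]
  rw [coeff_sum]
  have hterm : ∀ k : Fin (n+1) → ℕ,
      coeff (2 • γ) ((Nat.multinomial Finset.univ k : MvPolynomial (Fin (n+1)) ℝ) *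
        ∏ i, ((X i) ^ 2) ^ k i)
      = (Nat.multinomial Finset.univ k : ℝ) *
        (if (Finsupp.equivFunOnFinite.symm (fun i => 2 * k i)) = 2 • γ then 1 else 0) := by
    intro k
    have : (∏ i, ((X i : MvPolynomial (Fin (n+1)) ℝ) ^ 2) ^ k i)
        = monomial (Finsupp.equivFunOnFinite.symm (fun i => 2 * k i)) (1:ℝ) := by
      rw [← prod_X_pow_univ]
      refine Finset.prod_congr rfl fun i _ => ?_
      rw [← pow_mul]
      congr 1
    rw [this]
    rw [show ((Nat.multinomial Finset.univ k : MvPolynomial (Fin (n+1)) ℝ)) = C ((Nat.multinomial Finset.univ k : ℝ)) by push_cast; rfl]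
    rw [coeff_C_mul, coeff_monomial]
  simp_rw [hterm]
  rw [Finset.sum_eq_single (fun i => γ i)]
  · rw [if_pos, mul_one]
    ext i
    simp [Finsupp.smul_apply]
  · intro k hk hkne
    rw [if_neg, mul_zero]
    intro heq
    apply hkne
    funext i
    have := DFunLike.congr_fun heq i
    simp [Finsupp.smul_apply] at this
    omega
  · intro h
    exfalso
    apply h
    rw [Finset.mem_piAntidiag]
    exact ⟨hγ, fun i _ => Finset.mem_univ i⟩



variable {n : ℕ}


/-- half of an (even) exponent vector -/
noncomputable def half {σ : Type*} (β : σ →₀ ℕ) : σ →₀ ℕ := Finsupp.mapRange (· / 2) (by norm_num) β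

lemma half_apply {σ : Type*} (β : σ →₀ ℕ) (i : σ) : half β i = β i / 2 :=
  Finsupp.mapRange_apply

lemma sum_eq_of_homog {g : MvPolynomial (Fin (n+1)) ℝ} {m : ℕ} (hg : g.IsHomogeneous m)
    {β : Fin (n+1) →₀ ℕ} (hβ : coeff β g ≠ 0) : ∑ i, β i = m := by
  have h1 := hg hβ
  rw [← h1]
  rw [show (Finsupp.weight 1 : (Fin (n+1) →₀ ℕ) →+ ℕ) = Finsupp.weight (fun _ => 1) from rfl, ← Finsupp.degree_eq_weight_one, Finsupp.degree]
  exact (Finset.sum_subset (Finset.subset_univ _) (fun x _ hx =>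
    Finsupp.notMem_support_iff.mp hx)).symm

lemma sum_sq_le_sq_sum (s : Finset (Fin (n+1))) (a : Fin (n+1) → ℕ) :
    ∑ i ∈ s, (a i) ^ 2 ≤ (∑ i ∈ s, a i) ^ 2 := by
  calc ∑ i ∈ s, (a i)^2 ≤ ∑ i ∈ s, a i * (∑ j ∈ s, a j) := by
        apply Finset.sum_le_sum
        intro i hi
        rw [pow_two]
        exact Nat.mul_le_mul_left _ (Finset.single_le_sum (fun j _ => Nat.zero_le _) hi)
    _ = (∑ i ∈ s, a i)^2 := by rw [← Finset.sum_mul, pow_two]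

lemma descFactorial_mul_factorial : ∀ (a δ : ℕ), a ≤ δ →
    δ.descFactorial a * (δ - a).factorial = δ.factorial
  | 0, δ, _ => by simp
  | (a+1), δ, h => by
    have IH := descFactorial_mul_factorial a δ (Nat.le_of_succ_le h)
    rw [Nat.descFactorial_succ]
    have h1 : δ - a = (δ - (a+1)) + 1 := by omega
    calc (δ - a) * δ.descFactorial a * (δ - (a+1)).factorial
        = δ.descFactorial a * ((δ - (a+1) + 1) * (δ - (a+1)).factorial) := by rw [← h1]; ring
      _ = δ.descFactorial a * (δ - a).factorial := by rw [← Nat.factorial_succ, ← h1]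
      _ = δ.factorial := IH


lemma flip_Q (i : Fin (n+1)) : flip i (Q n) = Q n := by
  rw [Q, map_sum]
  refine Finset.sum_congr rfl fun j _ => ?_
  rw [map_pow, flip_X]
  split <;> simp [neg_sq]

lemma isHomogeneous_Q : (Q n).IsHomogeneous 2 :=
  IsHomogeneous.sum _ _ _ (fun i _ => (isHomogeneous_X ℝ i).pow 2)

lemma eval_Q (x : Fin (n+1) → ℝ) : eval x (Q n) = ∑ i, (x i) ^ 2 := by
  rw [Q, map_sum]
  simp

lemma eval_Q_pos {x : Fin (n+1) → ℝ} (hx : x ≠ 0) : 0 < eval x (Q n) := by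
  rw [eval_Q]
  have : ∃ i, x i ≠ 0 := by
    by_contra h
    push_neg at h
    exact hx (funext h)
  obtain ⟨i, hi⟩ := this
  exact Finset.sum_pos' (fun j _ => sq_nonneg _) ⟨i, Finset.mem_univ i, by positivity⟩

lemma polya (g : MvPolynomial (Fin (n+1)) ℝ) (m : ℕ) (hg : g.IsHomogeneous m)
    (hpos : ∀ x : Fin (n+1) → ℝ, x ≠ 0 → 0 < eval x g)
    (hinv : ∀ i, flip i g = g) :
    ∃ N : ℕ, ∀ β, 0 ≤ coeff β ((Q n) ^ N * g) := by
  classical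
  have heven : ∀ β ∈ g.support, ∀ i, Even (β i) := fun β hβ i => even_of_flip (hinv i) β hβ
  have hgne : g ≠ 0 := by
    intro h
    have h1 := hpos (fun _ => 1) (by
      intro h0
      exact one_ne_zero (congrFun h0 0))
    rw [h] at h1
    simp at h1
  -- m is even
  have hm2 : 2 ∣ m := by
    obtain ⟨β₀, hβ₀⟩ := (MvPolynomial.support_nonempty).mpr hgne
    have h1 : ∑ i, β₀ i = m := sum_eq_of_homog hg (mem_support_iff.mp hβ₀)
    rw [← h1]
    exact Finset.dvd_sum (fun i _ => (heven β₀ hβ₀ i).two_dvd)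
  set e' := m / 2 with he'def
  have hm : m = 2 * e' := by omega
  -- the compact set K
  set K := {x : Fin (n+1) → ℝ | (∑ i, (x i)^2) = 1 ∧ ∀ i, 0 ≤ x i} with hKdef
  have hKsub : K ⊆ Metric.closedBall 0 1 := by
    intro x hx
    rw [mem_closedBall_zero_iff]
    rw [pi_norm_le_iff_of_nonneg zero_le_one]
    intro i
    rw [Real.norm_eq_abs, ← Real.sqrt_one]
    rw [show |x i| = Real.sqrt ((x i)^2) by rw [Real.sqrt_sq_eq_abs]]
    apply Real.sqrt_le_sqrt
    rw [← hx.1]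
    exact Finset.single_le_sum (fun j _ => sq_nonneg (x j)) (Finset.mem_univ i)
  have hKclosed : IsClosed K := by
    have hEq : K = {x : Fin (n+1) → ℝ | (∑ i, (x i)^2) = 1}
        ∩ ⋂ i, {x : Fin (n+1) → ℝ | 0 ≤ x i} := by
      ext x
      simp [hKdef, Set.mem_iInter]
    rw [hEq]
    apply IsClosed.inter
    · exact isClosed_eq (continuous_finset_sum _ fun i _ => (continuous_apply i).pow 2)
        continuous_const
    · exact isClosed_iInter (fun i => isClosed_le continuous_const (continuous_apply i))
  have hKcpt : IsCompact K := (isCompact_closedBall 0 1).of_isClosed_subset hKclosed hKsub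
  have hKne : K.Nonempty := by
    refine ⟨(fun j => if j = 0 then 1 else 0), ?_, fun i => by
      show (0:ℝ) ≤ if i = 0 then 1 else 0
      split <;> norm_num⟩
    have h1 : ∀ j : Fin (n+1), ((if j = (0:Fin (n+1)) then (1:ℝ) else 0))^2
        = if j = 0 then (1:ℝ) else 0 := by intro j; split <;> norm_num
    simp only [h1]
    rw [Finset.sum_ite_eq' Finset.univ (0 : Fin (n+1)) (fun _ => (1:ℝ))]
    simp
  obtain ⟨x₀, hx₀K, hminOn⟩ := hKcpt.exists_isMinOn hKne
    ((MvPolynomial.continuous_eval (p := g)).continuousOn)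
  have hmin : ∀ y ∈ K, eval x₀ g ≤ eval y g := fun y hy => hminOn hy
  set μ := eval x₀ g with hμdef
  have hμ : 0 < μ := by
    apply hpos
    intro h0
    have := hx₀K.1
    rw [h0] at this
    simp at this
  set A := ∑ α ∈ g.support, |coeff α g| with hAdef
  have hA0 : 0 ≤ A := Finset.sum_nonneg (fun α _ => abs_nonneg _)
  set N := ⌈(A * (e' : ℝ)^2) / μ⌉₊ + 1 with hNdef
  set D := N + e' with hDdef
  have hDpos : 0 < D := by omega
  have hDR : (0:ℝ) < (D:ℝ) := by exact_mod_cast hDpos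
  have hkey : A * (e' : ℝ)^2 < μ * D := by
    have h1 : (A * (e' : ℝ)^2) / μ < N := by
      calc (A * (e' : ℝ)^2) / μ ≤ ⌈(A * (e' : ℝ)^2) / μ⌉₊ := Nat.le_ceil _
        _ < N := by rw [hNdef]; push_cast; linarith
    have h2 : (N : ℝ) ≤ D := by exact_mod_cast Nat.le_add_right N e'
    have h3 : A * (e' : ℝ)^2 < N * μ := by rwa [div_lt_iff₀ hμ] at h1
    nlinarith

  refine ⟨N, fun β => ?_⟩
  by_cases hc : coeff β ((Q n) ^ N * g) = 0
  · rw [hc]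
  have hβs : β ∈ ((Q n)^N * g).support := mem_support_iff.mpr hc
  have hQinv : ∀ i, flip i ((Q n)^N * g) = (Q n)^N * g := fun i => by
    rw [map_mul, map_pow, flip_Q, hinv i]
  have hβeven : ∀ i, Even (β i) := fun i => even_of_flip (hQinv i) β hβs
  have hhom : ((Q n)^N * g).IsHomogeneous (2*N + m) := (isHomogeneous_Q.pow N).mul hg
  have hβdeg : ∑ i, β i = 2*N + m := sum_eq_of_homog hhom hc
  set δ := half β with hδdef
  have hδap : ∀ i, 2 * δ i = β i := fun i => by
    rw [hδdef, half_apply]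
    obtain ⟨t, ht⟩ := hβeven i
    omega
  have hδsum : ∑ i, δ i = D := by
    have h1 : 2 * (∑ i, δ i) = ∑ i, β i := by
      rw [Finset.mul_sum]
      exact Finset.sum_congr rfl (fun i _ => hδap i)
    omega
  have hδD : ∀ i, δ i ≤ D := fun i => by
    rw [← hδsum]
    exact Finset.single_le_sum (fun j _ => Nat.zero_le _) (Finset.mem_univ i)
  -- half-exponent facts for monomials of `g`
  have haux : ∀ α ∈ g.support, (∀ i, 2 * half α i = α i) ∧ (∑ i, half α i = e') := by
    intro α hα
    have hαe : ∀ i, 2 * half α i = α i := fun i => by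
      rw [half_apply]
      obtain ⟨t, ht⟩ := heven α hα i
      omega
    refine ⟨hαe, ?_⟩
    have h1 : ∑ i, α i = m := sum_eq_of_homog hg (mem_support_iff.mp hα)
    have h2 : 2 * (∑ i, half α i) = m := by
      rw [Finset.mul_sum, ← h1]
      exact Finset.sum_congr rfl fun i _ => hαe i
    omega
  -- the exact combinatorial identity, term by term
  have hfact : ∀ α ∈ g.support,
      (if α ≤ β then coeff (β - α) ((Q n)^N) * coeff α g else 0) * (∏ i, ((δ i).factorial : ℝ))
      = (N.factorial : ℝ) * ((∏ i, ((δ i).descFactorial (half α i) : ℝ)) * coeff α g) := by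
    intro α hα
    obtain ⟨hαe, hαsum⟩ := haux α hα
    by_cases hle : α ≤ β
    · have hle' : ∀ i, half α i ≤ δ i := fun i => by
        have h1 := (Finsupp.le_def.mp hle) i
        have h2 := hδap i
        have h3 := hαe i
        omega
      have hsub : β - α = 2 • (δ - half α) := by
        ext i
        rw [Finsupp.tsub_apply, Finsupp.smul_apply, smul_eq_mul, Finsupp.tsub_apply]
        have h2 := hδap i
        have h3 := hαe i
        omega
      have hsum' : ∑ i, (δ - half α) i = N := by
        have h1 : ∀ i, (δ - half α) i = δ i - half α i := fun i => Finsupp.tsub_apply δ (half α) i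
        have h2 : ∑ i, (δ i - half α i) + ∑ i, half α i = ∑ i, δ i := by
          rw [← Finset.sum_add_distrib]
          exact Finset.sum_congr rfl fun i _ => by have := hle' i; omega
        simp_rw [h1]
        omega
      rw [if_pos hle, hsub, coeff_Q_pow N _ hsum']
      have h3 : ∀ i, (δ i).factorial
          = (δ i).descFactorial (half α i) * ((δ - half α) i).factorial := by
        intro i
        rw [Finsupp.tsub_apply]
        exact (descFactorial_mul_factorial _ _ (hle' i)).symm
      have hnat : (∏ i, (δ i).factorial)
            * Nat.multinomial Finset.univ (fun i => (δ - half α) i)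
          = N.factorial * ∏ i, (δ i).descFactorial (half α i) := by
        have h4 : (∏ i, (δ i).factorial) = (∏ i, (δ i).descFactorial (half α i))
            * (∏ i, ((δ - half α) i).factorial) := by
          rw [← Finset.prod_mul_distrib]
          exact Finset.prod_congr rfl fun i _ => h3 i
        rw [h4, mul_assoc, Nat.multinomial_spec, hsum']
        ring
      have hnatR : (∏ i, ((δ i).factorial : ℝ))
            * (Nat.multinomial Finset.univ (fun i => (δ - half α) i) : ℝ)
          = (N.factorial : ℝ) * ∏ i, ((δ i).descFactorial (half α i) : ℝ) := by
        exact_mod_cast congrArg (fun t : ℕ => (t : ℝ)) hnat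
      linear_combination (coeff α g) * hnatR
    · rw [if_neg hle]
      have hex : ∃ i, δ i < half α i := by
        by_contra h
        push_neg at h
        apply hle
        rw [Finsupp.le_def]
        intro i
        have h1 := hαe i
        have h2 := hδap i
        have h3 := h i
        omega
      obtain ⟨i, hi⟩ := hex
      have h0 : ((δ i).descFactorial (half α i) : ℝ) = 0 := by
        rw [Nat.descFactorial_eq_zero_iff_lt.mpr hi]
        norm_num
      rw [show (∏ j, ((δ j).descFactorial (half α j) : ℝ)) = 0 from
        Finset.prod_eq_zero (Finset.mem_univ i) h0]
      ring
  -- sum of the identity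
  have hexp : coeff β ((Q n)^N * g)
      = ∑ α ∈ g.support, (if α ≤ β then coeff (β - α) ((Q n)^N) * coeff α g else 0) := by
    have hgsum := support_sum_monomial_coeff g
    conv_lhs => rw [← hgsum]
    rw [Finset.mul_sum, coeff_sum]
    exact Finset.sum_congr rfl fun α _ => coeff_mul_monomial' _ _ _ _
  set T := ∑ α ∈ g.support, (∏ i, ((δ i).descFactorial (half α i) : ℝ)) * coeff α g with hTdef
  have hsumid : coeff β ((Q n)^N * g) * (∏ i, ((δ i).factorial : ℝ))
      = (N.factorial : ℝ) * T := by
    rw [hexp, Finset.sum_mul, hTdef, Finset.mul_sum]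
    exact Finset.sum_congr rfl fun α hα => hfact α hα
  -- the point on the sphere
  set z : Fin (n+1) → ℝ := fun i => (δ i : ℝ) / D with hzdef
  have hz0 : ∀ i, 0 ≤ z i := fun i => by positivity
  have hz1 : ∀ i, z i ≤ 1 := fun i => by
    rw [hzdef]
    apply div_le_one_of_le₀
    · exact_mod_cast hδD i
    · positivity
  set xh : Fin (n+1) → ℝ := fun i => Real.sqrt (z i) with hxhdef
  have hxh2 : ∀ i, (xh i)^2 = z i := fun i => Real.sq_sqrt (hz0 i)
  have hxhK : xh ∈ K := by
    constructor
    · simp only [hxh2]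
      rw [hzdef]
      rw [← Finset.sum_div]
      rw [show (∑ i, ((δ i : ℝ))) = ((∑ i, δ i : ℕ) : ℝ) by push_cast; rfl]
      rw [hδsum]
      field_simp
    · exact fun i => Real.sqrt_nonneg _
  have hμx : μ ≤ eval xh g := hmin xh hxhK
  -- expansion of the evaluation
  have hevalexp : eval xh g = ∑ α ∈ g.support, coeff α g * ∏ i, (z i) ^ (half α i) := by
    have hgsum := support_sum_monomial_coeff g
    conv_lhs => rw [← hgsum]
    rw [map_sum]
    refine Finset.sum_congr rfl fun α hα => ?_
    obtain ⟨hαe, hαsum⟩ := haux α hα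
    rw [eval_monomial]
    congr 1
    rw [Finsupp.prod_fintype _ _ (fun i => pow_zero _)]
    refine Finset.prod_congr rfl fun i _ => ?_
    rw [← hαe i, pow_mul, hxh2 i]
  -- the scaled sum S
  set S := ∑ α ∈ g.support, coeff α g
      * ((∏ i, ((δ i).descFactorial (half α i) : ℝ)) / (D:ℝ)^e') with hSdef
  have hTS : T = (D:ℝ)^e' * S := by
    rw [hTdef, hSdef, Finset.mul_sum]
    refine Finset.sum_congr rfl fun α hα => ?_
    field_simp
  -- per-α bound
  have hαbound : ∀ α ∈ g.support,
      |(∏ i, (z i) ^ (half α i))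
        - (∏ i, ((δ i).descFactorial (half α i) : ℝ)) / (D:ℝ)^e'| ≤ (e':ℝ)^2 / D := by
    intro α hα
    obtain ⟨hαe, hαsum⟩ := haux α hα
    set p : Fin (n+1) → ℝ := fun i => (z i) ^ (half α i) with hpdef
    set q : Fin (n+1) → ℝ := fun i => ((δ i).descFactorial (half α i) : ℝ) / (D:ℝ)^(half α i)
      with hqdef
    have hq0 : ∀ i, 0 ≤ q i := fun i => by rw [hqdef]; positivity
    have hqp : ∀ i, q i ≤ p i := fun i => by
      rw [hqdef, hpdef]
      have h1 : ((δ i).descFactorial (half α i) : ℝ) ≤ ((δ i : ℝ))^(half α i) := by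
        exact_mod_cast Nat.descFactorial_le_pow (δ i) (half α i)
      calc ((δ i).descFactorial (half α i) : ℝ) / (D:ℝ)^(half α i)
          ≤ ((δ i : ℝ))^(half α i) / (D:ℝ)^(half α i) := by gcongr
        _ = (z i) ^ (half α i) := by rw [hzdef, div_pow]
    have hp1 : ∀ i, p i ≤ 1 := fun i => by
      rw [hpdef]
      exact pow_le_one₀ (hz0 i) (hz1 i)
    have hqprod : (∏ i, q i)
        = (∏ i, ((δ i).descFactorial (half α i) : ℝ)) / (D:ℝ)^e' := by
      rw [hqdef, Finset.prod_div_distrib, Finset.prod_pow_eq_pow_sum, hαsum]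
    have hdiff : (∏ i, p i) - (∏ i, q i) ≤ (e':ℝ)^2 / D := by
      calc (∏ i, p i) - (∏ i, q i) ≤ ∑ i, (p i - q i) :=
            prod_sub_prod_le Finset.univ p q (fun i _ => hq0 i) (fun i _ => hqp i)
              (fun i _ => hp1 i)
        _ ≤ ∑ i, ((half α i : ℝ))^2 / D := by
            apply Finset.sum_le_sum
            intro i _
            rw [hpdef, hqdef, hzdef]
            exact desc_ratio_bound hDpos (half α i) (δ i) (hδD i)
        _ ≤ (e':ℝ)^2 / D := by
            rw [← Finset.sum_div]
            gcongr
            have h1 : (∑ i, ((half α i : ℝ))^2) = ((∑ i, (half α i)^2 : ℕ) : ℝ) := by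
              push_cast
              rfl
            rw [h1]
            have h2 : (∑ i, (half α i)^2) ≤ e'^2 := by
              rw [← hαsum]
              exact sum_sq_le_sq_sum Finset.univ _
            exact_mod_cast h2
    have hnonneg : 0 ≤ (∏ i, p i) - (∏ i, q i) := by
      have h5 : (∏ i, q i) ≤ ∏ i, p i :=
        Finset.prod_le_prod (s := Finset.univ) (fun i _ => hq0 i) (fun i _ => hqp i)
      linarith
    rw [← hqprod, abs_of_nonneg hnonneg]
    exact hdiff
  have hSbound : |eval xh g - S| ≤ A * ((e':ℝ)^2 / D) := by
    rw [hevalexp, hSdef, ← Finset.sum_sub_distrib]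
    calc |∑ α ∈ g.support, (coeff α g * (∏ i, (z i)^(half α i))
          - coeff α g * ((∏ i, ((δ i).descFactorial (half α i):ℝ)) / (D:ℝ)^e'))|
        ≤ ∑ α ∈ g.support, |coeff α g * (∏ i, (z i)^(half α i))
          - coeff α g * ((∏ i, ((δ i).descFactorial (half α i):ℝ)) / (D:ℝ)^e')| :=
          Finset.abs_sum_le_sum_abs _ _
      _ ≤ ∑ α ∈ g.support, |coeff α g| * ((e':ℝ)^2 / D) := by
          apply Finset.sum_le_sum
          intro α hα
          rw [← mul_sub, abs_mul]
          exact mul_le_mul_of_nonneg_left (hαbound α hα) (abs_nonneg _)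
      _ = A * ((e':ℝ)^2 / D) := by rw [hAdef, Finset.sum_mul]
  have hS : 0 < S := by
    have h1 : A * ((e':ℝ)^2/D) < μ := by
      rw [mul_div_assoc'] at *
      rw [div_lt_iff₀ hDR]
      linarith
    have h2 := (abs_le.mp hSbound).2
    linarith
  have hT : 0 ≤ T := by
    rw [hTS]
    exact mul_nonneg (by positivity) hS.le
  have hP : (0:ℝ) < ∏ i, ((δ i).factorial : ℝ) :=
    Finset.prod_pos (fun i _ => by exact_mod_cast Nat.factorial_pos (δ i))
  have h9 : 0 ≤ coeff β ((Q n)^N * g) * (∏ i, ((δ i).factorial : ℝ)) := by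
    rw [hsumid]
    exact mul_nonneg (by positivity) hT
  have h10 := div_nonneg h9 hP.le
  rwa [mul_div_cancel_right₀ _ (ne_of_gt hP)] at h10

lemma isMonomialSOS_of_coeffs {p : MvPolynomial (Fin (n+1)) ℝ}
    (h1 : ∀ β, 0 ≤ coeff β p) (h2 : ∀ β ∈ p.support, ∀ i, Even (β i)) :
    IsMonomialSOS p := by
  classical
  refine ⟨p.support.card, fun i => Real.sqrt (coeff (p.support.equivFin.symm i) p),
    fun i => half ((p.support.equivFin.symm i) : Fin (n+1) →₀ ℕ), ?_⟩
  have hterm : ∀ s : p.support,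
      (monomial (half (s : Fin (n+1) →₀ ℕ)) (Real.sqrt (coeff (s : Fin (n+1) →₀ ℕ) p)))^2
      = monomial (s : Fin (n+1) →₀ ℕ) (coeff (s : Fin (n+1) →₀ ℕ) p) := by
    intro s
    rw [pow_two, monomial_mul]
    have heq : half (s : Fin (n+1) →₀ ℕ) + half (s : Fin (n+1) →₀ ℕ) = (s : Fin (n+1) →₀ ℕ) := by
      ext i
      rw [Finsupp.add_apply, half_apply]
      obtain ⟨t, ht⟩ := h2 s s.2 i
      omega
    rw [heq, Real.mul_self_sqrt (h1 _)]
  have hsum : ∑ i : Fin p.support.card,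
      (monomial (half ((p.support.equivFin.symm i) : Fin (n+1) →₀ ℕ))
        (Real.sqrt (coeff ((p.support.equivFin.symm i) : Fin (n+1) →₀ ℕ) p)))^2
      = ∑ s : p.support,
        (monomial (half (s : Fin (n+1) →₀ ℕ)) (Real.sqrt (coeff (s : Fin (n+1) →₀ ℕ) p)))^2 :=
    Fintype.sum_equiv p.support.equivFin.symm _ _ (fun i => rfl)
  rw [hsum]
  rw [show (∑ s : p.support,
      (monomial (half (s : Fin (n+1) →₀ ℕ)) (Real.sqrt (coeff (s : Fin (n+1) →₀ ℕ) p)))^2)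
      = ∑ s : p.support, monomial (s : Fin (n+1) →₀ ℕ) (coeff (s : Fin (n+1) →₀ ℕ) p) from
    Finset.sum_congr rfl (fun s _ => hterm s)]
  rw [Finset.sum_coe_sort p.support (fun β => monomial β (coeff β p))]
  exact (support_sum_monomial_coeff p).symm

/-- the cone of sums `monomial-SOS + SOS`, both positive away from the origin -/
def Cone (n : ℕ) (p : MvPolynomial (Fin (n+1)) ℝ) : Prop :=
  ∃ M R, IsMonomialSOS M ∧ IsSOS R ∧
    (∀ x : Fin (n+1) → ℝ, x ≠ 0 → 0 < eval x M) ∧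
    (∀ x : Fin (n+1) → ℝ, x ≠ 0 → 0 < eval x R) ∧ p = M + R

lemma Cone.pos {p : MvPolynomial (Fin (n+1)) ℝ} (hp : Cone n p) :
    ∀ x : Fin (n+1) → ℝ, x ≠ 0 → 0 < eval x p := by
  obtain ⟨M, R, _, _, hM, hR, rfl⟩ := hp
  intro x hx
  rw [map_add]
  exact add_pos (hM x hx) (hR x hx)

lemma Cone.mul {p q : MvPolynomial (Fin (n+1)) ℝ} (hp : Cone n p) (hq : Cone n q) :
    Cone n (p * q) := by
  obtain ⟨M₁, R₁, hM₁, hR₁, hM₁p, hR₁p, rfl⟩ := hp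
  obtain ⟨M₂, R₂, hM₂, hR₂, hM₂p, hR₂p, rfl⟩ := hq
  refine ⟨M₁ * M₂, M₁ * R₂ + R₁ * M₂ + R₁ * R₂, hM₁.mul hM₂,
    ((hM₁.isSOS.mul hR₂).add (hR₁.mul hM₂.isSOS)).add (hR₁.mul hR₂), ?_, ?_, by ring⟩
  · intro x hx
    rw [map_mul]
    exact mul_pos (hM₁p x hx) (hM₂p x hx)
  · intro x hx
    simp only [map_add, map_mul]
    have := hM₁p x hx; have := hM₂p x hx; have := hR₁p x hx; have := hR₂p x hx
    positivity

lemma Cone.sq_mul_add (q : MvPolynomial (Fin (n+1)) ℝ) {c d : MvPolynomial (Fin (n+1)) ℝ}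
    (hc : Cone n c) (hd : Cone n d) : Cone n (q^2 * c + d) := by
  obtain ⟨Mc, Rc, hMc, hRc, hMcp, hRcp, rfl⟩ := hc
  obtain ⟨Md, Rd, hMd, hRd, hMdp, hRdp, rfl⟩ := hd
  refine ⟨Md, Rd + q^2 * (Mc + Rc), hMd, hRd.add ((hMc.isSOS.add hRc).sq_mul q), hMdp, ?_, by ring⟩
  intro x hx
  simp only [map_add, map_mul, map_pow]
  have h1 := hRdp x hx
  have h2 := hMcp x hx
  have h3 := hRcp x hx
  nlinarith [sq_nonneg (eval x q)]

lemma cone_of {p : MvPolynomial (Fin (n+1)) ℝ}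
    (h1 : ∀ β, 0 ≤ coeff β p) (h2 : ∀ β ∈ p.support, ∀ i, Even (β i))
    (h3 : ∀ x : Fin (n+1) → ℝ, x ≠ 0 → 0 < eval x p) : Cone n p := by
  have hhalf1 : ∀ β, 0 ≤ coeff β (C (1/2 : ℝ) * p) := fun β => by
    rw [coeff_C_mul]
    have := h1 β
    linarith
  have hhalf2 : ∀ β ∈ (C (1/2 : ℝ) * p).support, ∀ i, Even (β i) := by
    intro β hβ i
    apply h2 β
    rw [mem_support_iff] at hβ ⊢
    rw [coeff_C_mul] at hβ
    intro h0
    rw [h0] at hβ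
    simp at hβ
  have hhalf3 : ∀ x : Fin (n+1) → ℝ, x ≠ 0 → 0 < eval x (C (1/2 : ℝ) * p) := by
    intro x hx
    rw [map_mul, eval_C]
    have := h3 x hx
    linarith
  have hmsos := isMonomialSOS_of_coeffs hhalf1 hhalf2
  refine ⟨C (1/2 : ℝ) * p, C (1/2 : ℝ) * p, hmsos, hmsos.isSOS, hhalf3, hhalf3, ?_⟩
  rw [← add_mul, ← C_add]
  norm_num

lemma coeff_Q_nonneg : ∀ β, 0 ≤ coeff β (Q n) := by
  intro β
  rw [Q, coeff_sum]
  apply Finset.sum_nonneg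
  intro i _
  rw [X_pow_eq_monomial, coeff_monomial]
  split <;> norm_num

lemma coeff_mul_nonneg {p q : MvPolynomial (Fin (n+1)) ℝ}
    (hp : ∀ β, 0 ≤ coeff β p) (hq : ∀ β, 0 ≤ coeff β q) : ∀ β, 0 ≤ coeff β (p * q) := by
  intro β
  classical
  rw [coeff_mul]
  exact Finset.sum_nonneg fun x _ => mul_nonneg (hp _) (hq _)

lemma coeff_Q_pow_nonneg (N : ℕ) : ∀ β, 0 ≤ coeff β ((Q n) ^ N) := by
  induction N with
  | zero =>
    intro β
    rw [pow_zero, coeff_one]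
    split <;> norm_num
  | succ N IH =>
    rw [pow_succ]
    exact coeff_mul_nonneg IH coeff_Q_nonneg

lemma key (k : ℕ) (g : MvPolynomial (Fin (n+1)) ℝ) (m : ℕ) (hg : g.IsHomogeneous m)
    (hpos : ∀ x : Fin (n+1) → ℝ, x ≠ 0 → 0 < eval x g)
    (hinv : ∀ i : Fin (n+1), k ≤ (i : ℕ) → flip i g = g) :
    ∃ C, Cone n C ∧ Cone n (C * g) := by
  induction k generalizing g m with
  | zero =>
    have hinv' : ∀ i, flip i g = g := fun i => hinv i (Nat.zero_le _)
    obtain ⟨N, hN⟩ := polya g m hg hpos hinv'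
    have hQNflip : ∀ i : Fin (n+1), flip i ((Q n)^N) = (Q n)^N := fun i => by
      rw [map_pow, flip_Q]
    have hQNpos : ∀ x : Fin (n+1) → ℝ, x ≠ 0 → 0 < eval x ((Q n)^N) := fun x hx => by
      rw [map_pow]
      exact pow_pos (eval_Q_pos hx) N
    refine ⟨(Q n)^N, ?_, ?_⟩
    · exact cone_of (coeff_Q_pow_nonneg N)
        (fun β hβ i => even_of_flip (hQNflip i) β hβ) hQNpos
    · refine cone_of hN ?_ ?_
      · intro β hβ i
        refine even_of_flip (p := (Q n)^N * g) ?_ β hβ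
        rw [map_mul, hQNflip i, hinv' i]
      · intro x hx
        rw [map_mul]
        exact mul_pos (hQNpos x hx) (hpos x hx)
  | succ k IH =>
    by_cases hk : k < n + 1
    · set i₀ : Fin (n+1) := ⟨k, hk⟩ with hi₀
      set gg := flip i₀ g with hgg
      have hggpos : ∀ x : Fin (n+1) → ℝ, x ≠ 0 → 0 < eval x gg := fun x hx => by
        rw [hgg, eval_flip]
        exact hpos _ (flipPt_ne_zero hx)
      have hgghom : gg.IsHomogeneous m := flip_isHomogeneous hg
      have hsplit : ∀ i : Fin (n+1), k ≤ (i : ℕ) → i = i₀ ∨ k + 1 ≤ (i : ℕ) := by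
        intro i hi
        rcases Nat.eq_or_lt_of_le hi with h | h
        · left
          apply Fin.ext
          rw [hi₀]
          simp
          omega
        · right
          omega
      have hinvgg : ∀ i : Fin (n+1), k + 1 ≤ (i : ℕ) → flip i gg = gg := by
        intro i hi
        rw [hgg, flip_comm, hinv i hi]
      have hinv1 : ∀ i : Fin (n+1), k ≤ (i : ℕ) → flip i (g * gg) = g * gg := by
        intro i hi
        rcases hsplit i hi with rfl | h
        · rw [map_mul, hgg, flip_flip]
          exact mul_comm _ _
        · rw [map_mul, hinv i h, hinvgg i h]
      have hinv2 : ∀ i : Fin (n+1), k ≤ (i : ℕ) → flip i (g + gg) = g + gg := by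
        intro i hi
        rcases hsplit i hi with rfl | h
        · rw [map_add, hgg, flip_flip]
          exact add_comm _ _
        · rw [map_add, hinv i h, hinvgg i h]
      obtain ⟨C₁, hC₁, hD₁⟩ := IH (g * gg) (m + m) (hg.mul hgghom)
        (fun x hx => by rw [map_mul]; exact mul_pos (hpos x hx) (hggpos x hx)) hinv1
      obtain ⟨C₂, hC₂, hD₂⟩ := IH (g + gg) m (hg.add hgghom)
        (fun x hx => by rw [map_add]; exact add_pos (hpos x hx) (hggpos x hx)) hinv2
      refine ⟨C₁ * (C₂ * (g + gg)), hC₁.mul hD₂, ?_⟩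
      have hring : C₁ * (C₂ * (g + gg)) * g = g^2 * (C₁ * C₂) + C₂ * (C₁ * (g * gg)) := by ring
      rw [hring]
      exact Cone.sq_mul_add g (hC₁.mul hC₂) (hC₂.mul hD₁)
    · refine IH g m hg hpos ?_
      intro i hi
      exact absurd hi (by have := i.isLt; omega)

end HabichtAux

/-- **Habicht's theorem** (strengthened form): for `f` homogeneous of even degree `2d`
and strictly positive off the origin, there are sums of squares `M₁, R₁, M₂, R₂`, each
positive away from the origin, with `M₁, M₂` sums of squares of monomials, such that
`(M₂ + R₂) * f = M₁ + R₁`. -/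
theorem habicht (n d : ℕ) (f : MvPolynomial (Fin (n + 1)) ℝ)
    (hf : f.IsHomogeneous (2 * d))
    (hpos : ∀ x : Fin (n + 1) → ℝ, x ≠ 0 → 0 < eval x f) :
    ∃ M₁ R₁ M₂ R₂ : MvPolynomial (Fin (n + 1)) ℝ,
      IsMonomialSOS M₁ ∧ IsMonomialSOS M₂ ∧ IsSOS R₁ ∧ IsSOS R₂ ∧
      (∀ x : Fin (n + 1) → ℝ, x ≠ 0 → 0 < eval x M₁) ∧
      (∀ x : Fin (n + 1) → ℝ, x ≠ 0 → 0 < eval x R₁) ∧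
      (∀ x : Fin (n + 1) → ℝ, x ≠ 0 → 0 < eval x M₂) ∧
      (∀ x : Fin (n + 1) → ℝ, x ≠ 0 → 0 < eval x R₂) ∧
      (M₂ + R₂) * f = M₁ + R₁ := by
  obtain ⟨C, hC, hCf⟩ := HabichtAux.key (n+1) f (2*d) hf hpos
    (fun i hi => absurd hi (by have := i.isLt; omega))
  obtain ⟨M₂, R₂, hM₂, hR₂, hM₂p, hR₂p, hCdec⟩ := hC
  obtain ⟨M₁, R₁, hM₁, hR₁, hM₁p, hR₁p, hCfdec⟩ := hCf
  refine ⟨M₁, R₁, M₂, R₂, hM₁, hM₂, hR₁, hR₂, hM₁p, hR₁p, hM₂p, hR₂p, ?_⟩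
  rw [← hCdec]
  exact hCfdec
end

section
/- Let λ_0 = 1 - x_1 - ... - x_n, λ_1 = x_1, ..., λ_n = x_n, and let f ∈ ℝ[x_1,...,x_n] be strictly positive on the standard n-simplex {x ∈ ℝ^n : x_i ≥ 0 for all i, x_1 + ... + x_n ≤ 1}. Then there exist finitely many nonnegative reals a_α (indexed by multi-indices α ∈ ℕ^{n+1}, with all a_α > 0 when nonzero) such that f = Σ_α a_α λ_0^{α_0} λ_1^{α_1} ⋯ λ_n^{α_n}. -/
open MvPolynomial Finset

namespace PolyaAux

/-- Product difference bound when all factors lie in `[-1,1]`. -/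
lemma abs_prod_sub_prod_le : ∀ (k : ℕ) (u v : Fin k → ℝ) (δ : ℝ),
    (∀ j, |u j| ≤ 1) → (∀ j, |v j| ≤ 1) → (∀ j, |u j - v j| ≤ δ) →
    |∏ j, u j - ∏ j, v j| ≤ k * δ
  | 0, u, v, δ, _, _, _ => by simp
  | (k+1), u, v, δ, hu, hv, hd => by
    have hδ : 0 ≤ δ := le_trans (abs_nonneg _) (hd 0)
    have ih := abs_prod_sub_prod_le k (fun j => u j.succ) (fun j => v j.succ) δ
      (fun j => hu _) (fun j => hv _) (fun j => hd _)
    rw [Fin.prod_univ_succ, Fin.prod_univ_succ]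
    have hQ : |∏ j : Fin k, v j.succ| ≤ 1 := by
      rw [Finset.abs_prod]
      exact Finset.prod_le_one (fun j _ => abs_nonneg _) (fun j _ => hv _)
    have key : u 0 * ∏ j : Fin k, u j.succ - v 0 * ∏ j : Fin k, v j.succ
        = u 0 * (∏ j : Fin k, u j.succ - ∏ j : Fin k, v j.succ)
          + (u 0 - v 0) * ∏ j : Fin k, v j.succ := by ring
    rw [key]
    calc |u 0 * (∏ j : Fin k, u j.succ - ∏ j : Fin k, v j.succ)
          + (u 0 - v 0) * ∏ j : Fin k, v j.succ|
        ≤ |u 0| * |∏ j : Fin k, u j.succ - ∏ j : Fin k, v j.succ|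
          + |u 0 - v 0| * |∏ j : Fin k, v j.succ| := by
          refine (abs_add_le _ _).trans ?_
          rw [abs_mul, abs_mul]
      _ ≤ 1 * (k * δ) + δ * 1 :=
          add_le_add (mul_le_mul (hu 0) ih (abs_nonneg _) zero_le_one)
            (mul_le_mul (hd 0) hQ (abs_nonneg _) hδ)
      _ = (↑(k+1)) * δ := by push_cast; ring

/-- Cast of `Nat.descFactorial` as a real product. -/
lemma cast_descFactorial (t a : ℕ) :
    (Nat.descFactorial t a : ℝ) = ∏ j ∈ Finset.range a, ((t : ℝ) - j) := by
  rcases le_or_gt a t with h | h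
  · rw [Nat.descFactorial_eq_prod_range, Nat.cast_prod]
    refine Finset.prod_congr rfl fun j hj => ?_
    rw [Finset.mem_range] at hj
    have : j ≤ t := by omega
    push_cast [this]
    ring
  · rw [Nat.descFactorial_eq_zero_iff_lt.2 h, Nat.cast_zero]
    symm
    refine Finset.prod_eq_zero (Finset.mem_range.2 h) ?_
    simp

/-- Single-variable Bernstein-type estimate. -/
lemma inner_est (d N a ti : ℕ) (ha : a ≤ d) (hti : ti ≤ N) (hdN : d ≤ N) (hN : 1 ≤ N) :
    |(Nat.descFactorial ti a : ℝ) / (N : ℝ) ^ a - ((ti : ℝ) / N) ^ a| ≤ d * d / N := by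
  have hNR : (0 : ℝ) < N := by exact_mod_cast hN
  have h1 : (Nat.descFactorial ti a : ℝ) / (N : ℝ) ^ a
      = ∏ j : Fin a, (((ti : ℝ) - j) / N) := by
    rw [cast_descFactorial, Finset.prod_div_distrib, Finset.prod_const, card_univ,
      Fintype.card_fin, ← Fin.prod_univ_eq_prod_range (fun j => ((ti : ℝ) - j))]
  have h2 : ((ti : ℝ) / N) ^ a = ∏ _j : Fin a, ((ti : ℝ) / N) := by
    rw [Finset.prod_const, card_univ, Fintype.card_fin]
  rw [h1, h2]
  have := abs_prod_sub_prod_le a (fun j => ((ti : ℝ) - j) / N) (fun _ => (ti : ℝ) / N)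
    ((d : ℝ) / N) ?_ ?_ ?_
  · refine this.trans ?_
    have haR : (a : ℝ) ≤ d := by exact_mod_cast ha
    have he : (a : ℝ) * ((d : ℝ) / N) = ((a : ℝ) * d) / N := by ring
    rw [he]
    gcongr
  · intro j
    rw [abs_div, abs_of_nonneg hNR.le, div_le_one hNR]
    have hj : (j : ℝ) ≤ N := by
      have : (j : ℕ) ≤ N := by have := j.2; omega
      exact_mod_cast this
    have htiR : (ti : ℝ) ≤ N := by exact_mod_cast hti
    rw [abs_le]
    constructor <;> [linarith [Nat.cast_nonneg (α := ℝ) ti, Nat.cast_nonneg (α := ℝ) j];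
      linarith [Nat.cast_nonneg (α := ℝ) j]]
  · intro j
    rw [abs_div, abs_of_nonneg hNR.le, div_le_one hNR, abs_of_nonneg (Nat.cast_nonneg ti)]
    exact_mod_cast hti
  · intro j
    have hj : (j : ℝ) ≤ d := by
      have : (j : ℕ) ≤ d := by have := j.2; omega
      exact_mod_cast this
    have : ((ti : ℝ) - j) / N - (ti : ℝ) / N = -(j / N) := by ring
    rw [this, abs_neg, abs_div, abs_of_nonneg hNR.le, abs_of_nonneg (Nat.cast_nonneg j)]
    gcongr

/-- The main Bernstein-type estimate on the simplex. -/
lemma key_est (n d N : ℕ) (α t : Fin n → ℕ) (hk : (∑ i, α i) ≤ d)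
    (ht : ∀ i, t i ≤ N) (hN : 2 * d * d + 1 ≤ N) :
    |(∏ i, (Nat.descFactorial (t i) (α i) : ℝ)) / (Nat.descFactorial N (∑ i, α i) : ℝ)
      - ∏ i, ((t i : ℝ) / N) ^ (α i)| ≤ (2 * (n + 1) * d * d) / N := by
  have hN1 : 1 ≤ N := by omega
  have hNR : (0 : ℝ) < N := by exact_mod_cast hN1
  have hdd : d ≤ d * d := by
    rcases Nat.eq_zero_or_pos d with h | h
    · simp [h]
    · calc d = d * 1 := (mul_one d).symm
        _ ≤ d * d := Nat.mul_le_mul_left d h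
  have hdN : d ≤ N := by nlinarith [hdd, hN]
  have hkN : (∑ i, α i) ≤ N := le_trans hk hdN
  set k := ∑ i, α i with hkdef
  -- the factor q = descFactorial N k / N^k
  have hdesc_pos : 0 < Nat.descFactorial N k := by
    rcases Nat.eq_zero_or_pos (Nat.descFactorial N k) with h | h
    · exact absurd (Nat.descFactorial_eq_zero_iff_lt.1 h) (by omega)
    · exact h
  have hdescR : (0 : ℝ) < (Nat.descFactorial N k : ℝ) := by exact_mod_cast hdesc_pos
  have hNk : (0 : ℝ) < (N : ℝ) ^ k := pow_pos hNR k
  set q : ℝ := (Nat.descFactorial N k : ℝ) / (N : ℝ) ^ k with hq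
  have hq_pos : 0 < q := div_pos hdescR hNk
  have hq_est : |q - 1| ≤ d * d / N := by
    have := inner_est d N k N hk le_rfl hdN hN1
    rwa [div_self hNR.ne', one_pow] at this
  have hddN : (d : ℝ) * d / N ≤ 1 / 2 := by
    rw [div_le_div_iff₀ hNR (by norm_num : (0:ℝ) < 2)]
    have : (2 * d * d + 1 : ℝ) ≤ N := by exact_mod_cast hN
    nlinarith
  have hq_half : (1 : ℝ) / 2 ≤ q := by
    have h1 : 1 - q ≤ |q - 1| := by
      rw [abs_sub_comm]; exact le_abs_self _
    linarith
  -- U and V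
  set U : ℝ := ∏ i, ((Nat.descFactorial (t i) (α i) : ℝ) / (N : ℝ) ^ (α i)) with hU
  set V : ℝ := ∏ i, ((t i : ℝ) / N) ^ (α i) with hV
  have hU_eq : (∏ i, (Nat.descFactorial (t i) (α i) : ℝ)) / (N : ℝ) ^ k = U := by
    rw [hU, Finset.prod_div_distrib, Finset.prod_pow_eq_pow_sum]
  have hUi : ∀ i, |(Nat.descFactorial (t i) (α i) : ℝ) / (N : ℝ) ^ (α i)| ≤ 1 := by
    intro i
    rw [abs_div, abs_of_nonneg (Nat.cast_nonneg _), abs_of_nonneg (pow_pos hNR _).le,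
      div_le_one (pow_pos hNR _)]
    have h1 : Nat.descFactorial (t i) (α i) ≤ N ^ (α i) :=
      le_trans (Nat.descFactorial_le_pow _ _) (Nat.pow_le_pow_left (ht i) _)
    exact_mod_cast h1
  have hVi : ∀ i, |((t i : ℝ) / N) ^ (α i)| ≤ 1 := by
    intro i
    rw [abs_pow]
    refine pow_le_one₀ (abs_nonneg _) ?_
    rw [abs_div, abs_of_nonneg (Nat.cast_nonneg _), abs_of_nonneg hNR.le,
      div_le_one hNR]
    exact_mod_cast ht i
  have hUV : |U - V| ≤ n * ((d : ℝ) * d / N) := by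
    have hai : ∀ i, α i ≤ d := fun i =>
      le_trans (Finset.single_le_sum (f := fun i => α i) (fun _ _ => Nat.zero_le _)
        (Finset.mem_univ i)) hk
    exact abs_prod_sub_prod_le n _ _ _ hUi hVi
      (fun i => inner_est d N (α i) (t i) (hai i) (ht i) hdN hN1)
  have hV1 : |V| ≤ 1 := by
    rw [hV, Finset.abs_prod]
    exact Finset.prod_le_one (fun i _ => abs_nonneg _) (fun i _ => hVi i)
  -- main computation
  have hmain : (∏ i, (Nat.descFactorial (t i) (α i) : ℝ)) / (Nat.descFactorial N k : ℝ)
      = U / q := by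
    rw [← hU_eq, hq]
    field_simp
  rw [hmain]
  have hUVq : |U - V * q| ≤ ((n : ℝ) + 1) * (d * d / N) := by
    have : U - V * q = (U - V) + V * (1 - q) := by ring
    rw [this]
    calc |(U - V) + V * (1 - q)| ≤ |U - V| + |V| * |1 - q| := by
          refine (abs_add_le _ _).trans ?_
          rw [abs_mul]
      _ ≤ n * ((d : ℝ) * d / N) + 1 * (d * d / N) := by
          refine add_le_add hUV (mul_le_mul hV1 ?_ (abs_nonneg _) zero_le_one)
          rwa [abs_sub_comm]
      _ = ((n : ℝ) + 1) * (d * d / N) := by ring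
  have h1 : |U / q - V| = |U - V * q| / q := by
    have h2 : U / q - V = (U - V * q) / q := by
      field_simp
    rw [h2, abs_div, abs_of_pos hq_pos]
  rw [h1]
  have hfinal : |U - V * q| / q ≤ 2 * (((n : ℝ) + 1) * (d * d / N)) := by
    calc |U - V * q| / q ≤ |U - V * q| / (1 / 2) :=
          div_le_div_of_nonneg_left (abs_nonneg _) (by norm_num) hq_half
      _ = 2 * |U - V * q| := by ring
      _ ≤ 2 * (((n : ℝ) + 1) * (d * d / N)) := by linarith
  refine hfinal.trans (le_of_eq ?_)
  push_cast
  ring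

lemma cast_multinomial_univ {m : ℕ} (g : Fin m → ℕ) :
    (Nat.multinomial Finset.univ g : ℝ)
      = (Nat.factorial (∑ i, g i) : ℝ) / ∏ i, (Nat.factorial (g i) : ℝ) := by
  have h := Nat.multinomial_spec Finset.univ g
  have hne : (∏ i, (Nat.factorial (g i) : ℝ)) ≠ 0 :=
    Finset.prod_ne_zero_iff.2 fun i _ => by
      exact_mod_cast (Nat.factorial_ne_zero (g i))
  rw [eq_div_iff hne]
  rw [mul_comm]
  exact_mod_cast congrArg (Nat.cast : ℕ → ℝ) h

lemma cast_descFactorial_div {a b : ℕ} (h : b ≤ a) :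
    (Nat.descFactorial a b : ℝ) = (Nat.factorial a : ℝ) / (Nat.factorial (a - b) : ℝ) := by
  have hspec := Nat.factorial_mul_descFactorial h
  have hne : ((Nat.factorial (a - b) : ℝ)) ≠ 0 := by
    exact_mod_cast Nat.factorial_ne_zero (a - b)
  rw [eq_div_iff hne, mul_comm]
  exact_mod_cast congrArg (Nat.cast : ℕ → ℝ) hspec

/-- The multinomial coefficient ratio identity. -/
lemma mult_formula (n N : ℕ) (t : Fin (n + 1) →₀ ℕ) (ht : ∑ j, t j = N)
    (α : Fin n →₀ ℕ) (hk : (∑ i, α i) ≤ N) :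
    (if Finsupp.mapDomain Fin.succ α ≤ t then
        (Nat.multinomial Finset.univ ⇑(t - Finsupp.mapDomain Fin.succ α) : ℝ) else 0)
      = (Nat.multinomial Finset.univ ⇑t : ℝ) *
        ((∏ i, (Nat.descFactorial (t i.succ) (α i) : ℝ)) /
          (Nat.descFactorial N (∑ i, α i) : ℝ)) := by
  set αh : Fin (n + 1) →₀ ℕ := Finsupp.mapDomain Fin.succ α with hαh
  have hα0 : αh 0 = 0 := by
    refine Finsupp.mapDomain_notin_range _ _ ?_
    rintro ⟨i, hi⟩
    exact Fin.succ_ne_zero i hi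
  have hαs : ∀ i, αh i.succ = α i := fun i =>
    Finsupp.mapDomain_apply (Fin.succ_injective n) α i
  by_cases h : αh ≤ t
  · rw [if_pos h]
    have hpt : ∀ j, αh j ≤ t j := Finsupp.le_def.mp h
    set k := ∑ i, α i with hkdef
    have hsumαh : ∑ j, αh j = k := by
      rw [Fin.sum_univ_succ, hα0]
      simp [hαs, hkdef]
    have htisucc : ∀ i, α i ≤ t i.succ := fun i => by
      have := hpt i.succ; rwa [hαs] at this
    have hsub_apply : ∀ j, (t - αh) j = t j - αh j := fun j => Finsupp.tsub_apply t αh j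
    have hsub0 : (t - αh) 0 = t 0 := by rw [hsub_apply, hα0]; rfl
    have hsubs : ∀ i, (t - αh) i.succ = t i.succ - α i := fun i => by
      rw [hsub_apply, hαs]
    have hsumsub : ∑ j, (t - αh) j = N - k := by
      have h1 : ∑ j, (t j - αh j) = (∑ j, t j) - ∑ j, αh j :=
        Finset.sum_tsub_distrib _ fun j _ => hpt j
      calc ∑ j, (t - αh) j = ∑ j, (t j - αh j) := Finset.sum_congr rfl fun j _ => hsub_apply j
        _ = N - k := by rw [h1, ht, hsumαh]
    have hkN' : k ≤ N := hk
    -- cast everything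
    rw [cast_multinomial_univ, cast_multinomial_univ]
    rw [hsumsub, ht]
    rw [cast_descFactorial_div hkN']
    have hdesci : ∀ i, (Nat.descFactorial (t i.succ) (α i) : ℝ)
        = (Nat.factorial (t i.succ) : ℝ) / (Nat.factorial (t i.succ - α i) : ℝ) :=
      fun i => cast_descFactorial_div (htisucc i)
    rw [Finset.prod_congr rfl fun i _ => hdesci i]
    rw [Fin.prod_univ_succ, Fin.prod_univ_succ, hsub0]
    rw [Finset.prod_congr rfl fun (i : Fin n) (_ : i ∈ Finset.univ) =>
      congrArg (fun x => (Nat.factorial x : ℝ)) (hsubs i)]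
    rw [Finset.prod_div_distrib]
    have hf0 : ((Nat.factorial (t 0) : ℝ)) ≠ 0 := by exact_mod_cast Nat.factorial_ne_zero _
    have hfN : ((Nat.factorial N : ℝ)) ≠ 0 := by exact_mod_cast Nat.factorial_ne_zero _
    have hfNk : ((Nat.factorial (N - k) : ℝ)) ≠ 0 := by exact_mod_cast Nat.factorial_ne_zero _
    have hp1 : (∏ i : Fin n, (Nat.factorial (t i.succ) : ℝ)) ≠ 0 :=
      Finset.prod_ne_zero_iff.2 fun i _ => by exact_mod_cast Nat.factorial_ne_zero _
    have hp2 : (∏ i : Fin n, (Nat.factorial (t i.succ - α i) : ℝ)) ≠ 0 :=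
      Finset.prod_ne_zero_iff.2 fun i _ => by exact_mod_cast Nat.factorial_ne_zero _
    field_simp
  · rw [if_neg h]
    have : ∃ j, t j < αh j := by
      by_contra hc
      push_neg at hc
      exact h (Finsupp.le_def.mpr fun j => hc j)
    obtain ⟨j, hj⟩ := this
    rcases Fin.eq_zero_or_eq_succ j with rfl | ⟨i, rfl⟩
    · rw [hα0] at hj; omega
    · rw [hαs] at hj
      have : (Nat.descFactorial (t i.succ) (α i) : ℝ) = 0 := by
        rw [Nat.descFactorial_eq_zero_iff_lt.2 hj, Nat.cast_zero]
      rw [Finset.prod_eq_zero (Finset.mem_univ i) this]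
      simp

lemma coeff_sum_pow (m M : ℕ) (s : Fin m →₀ ℕ) :
    MvPolynomial.coeff s ((∑ j : Fin m, (X j : MvPolynomial (Fin m) ℝ)) ^ M)
      = if (∑ j, s j) = M then (Nat.multinomial Finset.univ ⇑s : ℝ) else 0 := by
  classical
  rw [show (∑ j : Fin m, (X j : MvPolynomial (Fin m) ℝ)) = ∑ j ∈ Finset.univ, X j from rfl]
  rw [Finset.sum_pow_eq_sum_piAntidiag, MvPolynomial.coeff_sum]
  have hterm : ∀ k : Fin m → ℕ,
      MvPolynomial.coeff s ((Nat.multinomial Finset.univ k : MvPolynomial (Fin m) ℝ) *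
        ∏ j, (X j : MvPolynomial (Fin m) ℝ) ^ k j)
      = if k = ⇑s then (Nat.multinomial Finset.univ k : ℝ) else 0 := by
    intro k
    set u : Fin m →₀ ℕ := Finsupp.equivFunOnFinite.symm k with hu
    have huk : ⇑u = k := rfl
    have hmon : (∏ j, (X j : MvPolynomial (Fin m) ℝ) ^ k j) = monomial u 1 := by
      rw [monomial_eq, C_1, one_mul, Finsupp.prod_pow]
      exact Finset.prod_congr rfl fun j _ => by rw [huk]
    rw [hmon]
    rw [show ((Nat.multinomial Finset.univ k : MvPolynomial (Fin m) ℝ))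
        = C ((Nat.multinomial Finset.univ k : ℝ)) from by
      rw [map_natCast (C : ℝ →+* MvPolynomial (Fin m) ℝ)]]
    rw [C_mul_monomial, mul_one, MvPolynomial.coeff_monomial]
    congr 1
    · rw [eq_iff_iff]
      constructor
      · rintro rfl; rfl
      · intro h
        rw [hu, h]
        exact Finsupp.ext fun j => rfl
  rw [Finset.sum_congr rfl fun k _ => hterm k]
  rw [Finset.sum_ite_eq' (Finset.piAntidiag Finset.univ M) (⇑s)
    (fun k => (Nat.multinomial Finset.univ k : ℝ))]
  congr 1
  rw [eq_iff_iff, Finset.mem_piAntidiag]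
  constructor
  · rintro ⟨h1, _⟩; exact h1
  · intro h1; exact ⟨h1, fun i _ => Finset.mem_univ i⟩

lemma mapDomain_succ_zero {n : ℕ} (α : Fin n →₀ ℕ) :
    (Finsupp.mapDomain Fin.succ α) 0 = 0 :=
  Finsupp.mapDomain_notin_range _ _ (by rintro ⟨i, hi⟩; exact Fin.succ_ne_zero i hi)

lemma mapDomain_succ_succ {n : ℕ} (α : Fin n →₀ ℕ) (i : Fin n) :
    (Finsupp.mapDomain Fin.succ α) i.succ = α i :=
  Finsupp.mapDomain_apply (Fin.succ_injective n) α i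

lemma sum_mapDomain_succ {n : ℕ} (α : Fin n →₀ ℕ) :
    ∑ j, (Finsupp.mapDomain Fin.succ α) j = ∑ i, α i := by
  rw [Fin.sum_univ_succ, mapDomain_succ_zero]
  simp [mapDomain_succ_succ]

lemma sum_sub_mapDomain {n : ℕ} (t : Fin (n + 1) →₀ ℕ) (α : Fin n →₀ ℕ)
    (h : Finsupp.mapDomain Fin.succ α ≤ t) :
    ∑ j, (t - Finsupp.mapDomain Fin.succ α) j = (∑ j, t j) - (∑ i, α i) := by
  have hpt := Finsupp.le_def.mp h
  have h1 : ∑ j, (t j - (Finsupp.mapDomain Fin.succ α) j)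
      = (∑ j, t j) - ∑ j, (Finsupp.mapDomain Fin.succ α) j :=
    Finset.sum_tsub_distrib _ fun j _ => hpt j
  calc ∑ j, (t - Finsupp.mapDomain Fin.succ α) j
      = ∑ j, (t j - (Finsupp.mapDomain Fin.succ α) j) :=
        Finset.sum_congr rfl fun j _ => Finsupp.tsub_apply _ _ j
    _ = (∑ j, t j) - (∑ i, α i) := by rw [h1, sum_mapDomain_succ]

end PolyaAux

open PolyaAux

/-- Polynomials strictly positive on the standard `n`-simplex are nonnegative
combinations of products of the linear polynomials
`λ₀ = 1 - x_1 - ⋯ - x_n, λ₁ = x_1, …, λ_n = x_n` describing its faces. -/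
theorem positive_on_simplex (n : ℕ) (f : MvPolynomial (Fin n) ℝ)
    (hf : ∀ x : Fin n → ℝ, (∀ i, 0 ≤ x i) → (∑ i, x i) ≤ 1 → 0 < eval x f) :
    ∃ (A : Finset (Fin (n + 1) →₀ ℕ)) (a : (Fin (n + 1) →₀ ℕ) → ℝ),
      (∀ α ∈ A, 0 < a α) ∧
      f = ∑ α ∈ A, C (a α) *
        ((1 - ∑ i, X i) ^ (α 0) * ∏ i : Fin n, (X i : MvPolynomial (Fin n) ℝ) ^ (α i.succ)) := by
  classical
  -- the simplex is compact and `f` attains a positive minimum `ε` on it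
  set Δ : Set (Fin n → ℝ) := {x | (∀ i, 0 ≤ x i) ∧ (∑ i, x i) ≤ 1} with hΔdef
  have hΔsub : Δ ⊆ Set.Icc (0 : Fin n → ℝ) 1 := by
    rintro x ⟨h1, h2⟩
    refine ⟨fun i => h1 i, fun i => ?_⟩
    calc x i ≤ ∑ j, x j := Finset.single_le_sum (fun j _ => h1 j) (Finset.mem_univ i)
      _ ≤ 1 := h2
  have hclosed : IsClosed Δ := by
    have hset : Δ = (⋂ i, {x : Fin n → ℝ | 0 ≤ x i}) ∩ {x : Fin n → ℝ | (∑ i, x i) ≤ 1} := by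
      ext x
      simp [hΔdef, Set.mem_iInter]
    rw [hset]
    exact IsClosed.inter
      (isClosed_iInter fun i => isClosed_le continuous_const (continuous_apply i))
      (isClosed_le (continuous_finset_sum _ fun i _ => continuous_apply i) continuous_const)
  have hcomp : IsCompact Δ := IsCompact.of_isClosed_subset isCompact_Icc hclosed hΔsub
  have h0Δ : (0 : Fin n → ℝ) ∈ Δ := ⟨fun i => le_refl 0, by simp⟩
  obtain ⟨x₀, hx₀, hmin⟩ := hcomp.exists_isMinOn ⟨0, h0Δ⟩
    (MvPolynomial.continuous_eval (p := f)).continuousOn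
  set ε := eval x₀ f with hε
  have hεpos : 0 < ε := hf x₀ hx₀.1 hx₀.2
  have hεle : ∀ x ∈ Δ, ε ≤ eval x f := fun x hx => hmin hx
  set d := f.totalDegree with hd
  have hkd : ∀ α ∈ f.support, (∑ i, α i) ≤ d := by
    intro α hα
    have h1 := MvPolynomial.le_totalDegree hα
    rwa [Finsupp.sum_fintype _ _ (fun _ => rfl)] at h1
  set Ca : ℝ := ∑ α ∈ f.support, |coeff α f| * (2 * ((n : ℝ) + 1) * (d : ℝ) * (d : ℝ)) with hCa
  have hCa0 : 0 ≤ Ca := Finset.sum_nonneg fun α _ => by positivity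
  obtain ⟨N₀, hN₀⟩ := exists_nat_gt (Ca / ε)
  set N := N₀ + 2 * d * d + 1 with hNdef
  have hN2d : 2 * d * d + 1 ≤ N := by omega
  have hN1 : 1 ≤ N := by omega
  have hNR : (0 : ℝ) < N := by exact_mod_cast hN1
  have hdd : d ≤ d * d := by
    rcases Nat.eq_zero_or_pos d with h | h
    · simp [h]
    · calc d = d * 1 := (mul_one d).symm
        _ ≤ d * d := Nat.mul_le_mul_left d h
  have hdN : d ≤ N := by nlinarith [hdd, hN2d]
  have hCaN : Ca / N < ε := by
    rw [div_lt_iff₀ hNR]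
    have h1 : Ca < N₀ * ε := (div_lt_iff₀ hεpos).1 hN₀
    have hN₀N : (N₀ : ℝ) ≤ N := by exact_mod_cast (by omega : N₀ ≤ N)
    nlinarith
  -- the substitution and the homogenized polynomial
  set g : Fin (n + 1) → MvPolynomial (Fin n) ℝ :=
    Fin.cases (1 - ∑ i, X i) (fun i => X i) with hg
  have hg0 : g 0 = 1 - ∑ i, X i := by simp [hg]
  have hgs : ∀ i : Fin n, g i.succ = X i := fun i => by simp [hg]
  have hgsum : ∑ j, g j = 1 := by
    rw [Fin.sum_univ_succ, hg0]
    rw [Finset.sum_congr rfl fun i _ => hgs i]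
    ring
  set G : MvPolynomial (Fin (n + 1)) ℝ :=
    ∑ α ∈ f.support, monomial (Finsupp.mapDomain Fin.succ α) (coeff α f) *
      (∑ j : Fin (n + 1), X j) ^ (N - (∑ i, α i)) with hG
  -- substituting the face polynomials into `G` recovers `f`
  have hΦ : aeval g G = f := by
    rw [hG, map_sum]
    conv_rhs => rw [← f.support_sum_monomial_coeff]
    refine Finset.sum_congr rfl fun α hα => ?_
    rw [map_mul, map_pow, map_sum]
    simp only [aeval_X]
    rw [show (∑ j : Fin (n + 1), g j) = 1 from hgsum, one_pow, mul_one]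
    rw [aeval_monomial, MvPolynomial.algebraMap_eq, Finsupp.prod_pow, Fin.prod_univ_succ]
    rw [mapDomain_succ_zero, pow_zero, one_mul]
    rw [Finset.prod_congr rfl fun i (_ : i ∈ Finset.univ) => by
      rw [mapDomain_succ_succ α i, hgs i]]
    rw [monomial_eq, Finsupp.prod_pow]
  -- coefficients of `G` on the relevant degree
  have hcoeff : ∀ t : Fin (n + 1) →₀ ℕ, (∑ j, t j) = N →
      MvPolynomial.coeff t G = (Nat.multinomial Finset.univ ⇑t : ℝ) *
        ∑ α ∈ f.support, coeff α f *
          ((∏ i, (Nat.descFactorial (t i.succ) (α i) : ℝ)) /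
            (Nat.descFactorial N (∑ i, α i) : ℝ)) := by
    intro t ht
    rw [hG, MvPolynomial.coeff_sum, Finset.mul_sum]
    refine Finset.sum_congr rfl fun α hα => ?_
    have hkN : (∑ i, α i) ≤ N := le_trans (hkd α hα) hdN
    rw [MvPolynomial.coeff_monomial_mul']
    by_cases h : Finsupp.mapDomain Fin.succ α ≤ t
    · rw [if_pos h, coeff_sum_pow]
      have hsub : ∑ j, (t - Finsupp.mapDomain Fin.succ α) j = N - (∑ i, α i) := by
        rw [sum_sub_mapDomain t α h, ht]
      rw [if_pos hsub]
      have hmf := mult_formula n N t ht α hkN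
      rw [if_pos h] at hmf
      rw [hmf]; ring
    · rw [if_neg h]
      have hmf := mult_formula n N t ht α hkN
      rw [if_neg h] at hmf
      calc (0 : ℝ)
          = coeff α f * ((Nat.multinomial Finset.univ ⇑t : ℝ) *
              ((∏ i, (Nat.descFactorial (t i.succ) (α i) : ℝ)) /
                (Nat.descFactorial N (∑ i, α i) : ℝ))) := by rw [← hmf, mul_zero]
        _ = (Nat.multinomial Finset.univ ⇑t : ℝ) *
            (coeff α f * ((∏ i, (Nat.descFactorial (t i.succ) (α i) : ℝ)) /
              (Nat.descFactorial N (∑ i, α i) : ℝ))) := by ring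
  -- coefficients away from degree `N` vanish
  have hzero : ∀ t : Fin (n + 1) →₀ ℕ, (∑ j, t j) ≠ N → MvPolynomial.coeff t G = 0 := by
    intro t ht
    rw [hG, MvPolynomial.coeff_sum]
    refine Finset.sum_eq_zero fun α hα => ?_
    rw [MvPolynomial.coeff_monomial_mul']
    by_cases h : Finsupp.mapDomain Fin.succ α ≤ t
    · rw [if_pos h, coeff_sum_pow, if_neg, mul_zero]
      intro hc
      rw [sum_sub_mapDomain t α h] at hc
      have h1 : (∑ i, α i) ≤ ∑ j, t j := by
        have h2 := Finset.sum_le_sum fun j (_ : j ∈ Finset.univ) => Finsupp.le_def.mp h j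
        rwa [sum_mapDomain_succ] at h2
      have hkN : (∑ i, α i) ≤ N := le_trans (hkd α hα) hdN
      omega
    · rw [if_neg h]
  -- coefficients in degree `N` are positive
  have hpos : ∀ t : Fin (n + 1) →₀ ℕ, (∑ j, t j) = N → 0 < MvPolynomial.coeff t G := by
    intro t ht
    rw [hcoeff t ht]
    have hmultpos : (0 : ℝ) < (Nat.multinomial Finset.univ ⇑t : ℝ) := by
      exact_mod_cast Nat.multinomial_pos _ _
    refine mul_pos hmultpos ?_
    set x : Fin n → ℝ := fun i => (t i.succ : ℝ) / N with hx
    have hti : ∀ i : Fin n, t i.succ ≤ N := by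
      intro i
      have h1 : t i.succ ≤ ∑ j, t j :=
        Finset.single_le_sum (fun j _ => Nat.zero_le _) (Finset.mem_univ i.succ)
      omega
    have hxΔ : x ∈ Δ := by
      constructor
      · intro i
        rw [hx]
        positivity
      · rw [hx]
        rw [← Finset.sum_div, div_le_one hNR]
        have h2 : ∑ i : Fin n, t i.succ ≤ ∑ j, t j := by
          rw [Fin.sum_univ_succ]; omega
        calc ∑ i : Fin n, (t i.succ : ℝ) = ((∑ i : Fin n, t i.succ : ℕ) : ℝ) := by push_cast; rfl
          _ ≤ (N : ℝ) := by exact_mod_cast (ht ▸ h2)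
    have heval : eval x f = ∑ α ∈ f.support, coeff α f * ∏ i, ((t i.succ : ℝ) / N) ^ (α i) := by
      rw [MvPolynomial.eval_eq']
    have hest : ∀ α ∈ f.support,
        |coeff α f * ((∏ i, (Nat.descFactorial (t i.succ) (α i) : ℝ)) /
            (Nat.descFactorial N (∑ i, α i) : ℝ))
          - coeff α f * ∏ i, ((t i.succ : ℝ) / N) ^ (α i)|
        ≤ |coeff α f| * (2 * ((n : ℝ) + 1) * (d : ℝ) * (d : ℝ) / (N : ℝ)) := by
      intro α hα
      rw [← mul_sub, abs_mul]
      exact mul_le_mul_of_nonneg_left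
        (key_est n d N (⇑α) (fun i => t i.succ) (hkd α hα) hti hN2d) (abs_nonneg _)
    have habs : |(∑ α ∈ f.support, coeff α f *
          ((∏ i, (Nat.descFactorial (t i.succ) (α i) : ℝ)) /
            (Nat.descFactorial N (∑ i, α i) : ℝ))) - eval x f| ≤ Ca / N := by
      rw [heval, ← Finset.sum_sub_distrib]
      refine (Finset.abs_sum_le_sum_abs _ _).trans ?_
      rw [hCa, Finset.sum_div]
      exact Finset.sum_le_sum fun α hα => (hest α hα).trans (le_of_eq (by ring))
    have h1 : ε ≤ eval x f := hεle x hxΔ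
    have h2 := (abs_le.1 habs).1
    linarith
  -- assemble the conclusion
  refine ⟨G.support, fun t => MvPolynomial.coeff t G, ?_, ?_⟩
  · intro t htsupp
    by_cases h : (∑ j, t j) = N
    · exact hpos t h
    · exact absurd (hzero t h) (MvPolynomial.mem_support_iff.1 htsupp)
  · conv_lhs => rw [← hΦ]
    conv_lhs => rw [← G.support_sum_monomial_coeff]
    rw [map_sum]
    refine Finset.sum_congr rfl fun t htsupp => ?_
    rw [aeval_monomial, MvPolynomial.algebraMap_eq, Finsupp.prod_pow, Fin.prod_univ_succ]
    rw [hg0]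
    rw [Finset.prod_congr rfl fun i (_ : i ∈ Finset.univ) => by rw [hgs i]]
end

section
/- Let S = {g_1,...,g_s} ⊂ ℝ[x_1,...,x_n] be a finite set of polynomials such that K_S = {x ∈ ℝ^n : g_i(x) ≥ 0 for all i} is compact, and let g_{s+1} ∈ ℝ[x_1,...,x_n]. Suppose that every polynomial strictly positive on K_S lies in the quadratic module M_S. Then every polynomial strictly positive on K_{S ∪ {g_{s+1}}} lies in the quadratic module M_{S ∪ {g_{s+1}}}. Moreover, in the representation it suffices to use a single square as the coefficient of g_{s+1}: if f > 0 on K_{S∪{g_{s+1}}} then there exists r ∈ ℝ[x_1,...,x_n] with f - r^2 g_{s+1} > 0 on K_S. -/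
open MvPolynomial

/-- Membership in the quadratic module generated by `g 0, …, g (s-1)`. -/
def InQM {σ : Type*} {s : ℕ} (g : Fin s → MvPolynomial σ ℝ) (f : MvPolynomial σ ℝ) : Prop :=
  ∃ (σ₀ : MvPolynomial σ ℝ) (τ : Fin s → MvPolynomial σ ℝ),
    IsSOS σ₀ ∧ (∀ i, IsSOS (τ i)) ∧ f = σ₀ + ∑ i, τ i * g i

/-- **Inductive property.** If `K_S` is compact and `S = {g 0, …, g (s-1)}` is Putinar,
then `S ∪ {g s}` is Putinar; moreover a single square suffices as coefficient of the
new generator. -/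
theorem inductive_property (n s : ℕ) (g : Fin (s + 1) → MvPolynomial (Fin n) ℝ)
    (hcomp : IsCompact {x : Fin n → ℝ | ∀ i : Fin s, 0 ≤ eval x (g i.castSucc)})
    (hput : ∀ f : MvPolynomial (Fin n) ℝ,
      (∀ x : Fin n → ℝ, (∀ i : Fin s, 0 ≤ eval x (g i.castSucc)) → 0 < eval x f) →
      InQM (fun i : Fin s => g i.castSucc) f) :
    (∀ f : MvPolynomial (Fin n) ℝ,
      (∀ x : Fin n → ℝ, (∀ i : Fin (s + 1), 0 ≤ eval x (g i)) → 0 < eval x f) →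
      InQM g f) ∧
    (∀ f : MvPolynomial (Fin n) ℝ,
      (∀ x : Fin n → ℝ, (∀ i : Fin (s + 1), 0 ≤ eval x (g i)) → 0 < eval x f) →
      ∃ r : MvPolynomial (Fin n) ℝ, ∀ x : Fin n → ℝ,
        (∀ i : Fin s, 0 ≤ eval x (g i.castSucc)) →
        0 < eval x (f - r ^ 2 * g (Fin.last s))) := by
  classical
  set K : Set (Fin n → ℝ) := {x | ∀ i : Fin s, 0 ≤ eval x (g i.castSucc)} with hKdef
  set G : (Fin n → ℝ) → ℝ := fun x => eval x (g (Fin.last s)) with hGdef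
  have hGc : Continuous G := MvPolynomial.continuous_eval _
  have hKclosed : IsClosed K := by
    have : K = ⋂ i : Fin s, (fun x => eval x (g i.castSucc)) ⁻¹' Set.Ici 0 := by
      ext x; simp [hKdef, Set.mem_iInter]
    rw [this]
    exact isClosed_iInter fun i => isClosed_Ici.preimage (MvPolynomial.continuous_eval _)
  -- key claim: a single square suffices
  have key : ∀ f : MvPolynomial (Fin n) ℝ,
      (∀ x : Fin n → ℝ, (∀ i : Fin (s + 1), 0 ≤ eval x (g i)) → 0 < eval x f) →
      ∃ r : MvPolynomial (Fin n) ℝ, ∀ x ∈ K,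
        0 < eval x (f - r ^ 2 * g (Fin.last s)) := by
    intro f hf
    by_cases hKne : K.Nonempty
    swap
    · exact ⟨0, fun x hx => absurd ⟨x, hx⟩ hKne⟩
    set F : (Fin n → ℝ) → ℝ := fun x => eval x f with hFdef
    have hFc : Continuous F := MvPolynomial.continuous_eval _
    -- f is positive on K ∩ {G ≥ 0}
    have hfK : ∀ x ∈ K, 0 ≤ G x → 0 < F x := by
      intro x hx hGx
      apply hf
      intro i
      rcases Fin.eq_castSucc_or_eq_last i with ⟨j, rfl⟩ | rfl
      · exact hx j
      · exact hGx
    -- Step 1: get ε > 0 with f > 0 on K ∩ {G ≥ -ε}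
    obtain ⟨ε, hε, hεpos⟩ : ∃ ε : ℝ, 0 < ε ∧ ∀ x ∈ K, -ε ≤ G x → 0 < F x := by
      set C : Set (Fin n → ℝ) := K ∩ F ⁻¹' Set.Iic 0 with hCdef
      have hCcomp : IsCompact C :=
        hcomp.of_isClosed_subset (hKclosed.inter (isClosed_Iic.preimage hFc))
          Set.inter_subset_left
      by_cases hCne : C.Nonempty
      · obtain ⟨x₀, hx₀, hmax⟩ := hCcomp.exists_isMaxOn hCne hGc.continuousOn
        have hGx₀ : G x₀ < 0 := by
          by_contra h
          push_neg at h
          have := hfK x₀ hx₀.1 h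
          have := hx₀.2
          simp only [Set.mem_preimage, Set.mem_Iic] at this
          linarith
        refine ⟨-G x₀ / 2, by linarith, ?_⟩
        intro x hx hGx
        by_contra h
        push_neg at h
        have hxC : x ∈ C := ⟨hx, by simpa using h⟩
        have h2 : G x ≤ G x₀ := hmax hxC
        linarith
      · refine ⟨1, one_pos, ?_⟩
        intro x hx _
        by_contra h
        push_neg at h
        exact hCne ⟨x, hx, by simpa using h⟩
    -- Step 2: get δ > 0 lower bound of f on K ∩ {G ≥ -ε}
    obtain ⟨δ, hδ, hδlb⟩ : ∃ δ : ℝ, 0 < δ ∧ ∀ x ∈ K, -ε ≤ G x → δ ≤ F x := by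
      set K₁ : Set (Fin n → ℝ) := K ∩ G ⁻¹' Set.Ici (-ε) with hK₁def
      have hK₁comp : IsCompact K₁ :=
        hcomp.of_isClosed_subset (hKclosed.inter (isClosed_Ici.preimage hGc))
          Set.inter_subset_left
      by_cases hK₁ne : K₁.Nonempty
      · obtain ⟨x₀, hx₀, hmin⟩ := hK₁comp.exists_isMinOn hK₁ne hFc.continuousOn
        refine ⟨F x₀, hεpos x₀ hx₀.1 hx₀.2, ?_⟩
        intro x hx hGx
        exact hmin ⟨hx, hGx⟩
      · refine ⟨1, one_pos, fun x hx hGx => absurd ⟨x, hx, hGx⟩ hK₁ne⟩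
    -- Step 3: bounds M for -f and B for |G| on K
    obtain ⟨M, hM0, hMlb⟩ : ∃ M : ℝ, 0 ≤ M ∧ ∀ x ∈ K, -M ≤ F x := by
      obtain ⟨x₀, _, hmin⟩ := hcomp.exists_isMinOn hKne hFc.continuousOn
      refine ⟨max (-F x₀) 0, le_max_right _ _, ?_⟩
      intro x hx
      have h2 : F x₀ ≤ F x := hmin hx
      have h1 : -max (-F x₀) 0 ≤ F x₀ := by
        rcases le_max_iff.mp (le_refl (max (-F x₀) 0)) with _ | _ <;>
          [skip; skip] <;> nlinarith [le_max_left (-F x₀) 0, le_max_right (-F x₀) 0]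
      linarith
    obtain ⟨B, hB0, hBub⟩ : ∃ B : ℝ, 0 < B ∧ ∀ x ∈ K, |G x| ≤ B := by
      obtain ⟨x₀, _, hmax⟩ := hcomp.exists_isMaxOn hKne (continuous_abs.comp hGc).continuousOn
      refine ⟨max (|G x₀|) 1, lt_of_lt_of_le one_pos (le_max_right _ _), ?_⟩
      intro x hx
      exact le_trans (hmax hx) (le_max_left _ _)
    -- Step 4: choose exponent k
    have hρ : B / (B + ε) < 1 := by
      rw [div_lt_one (by linarith)]; linarith
    have hρ0 : 0 ≤ B / (B + ε) := by positivity
    obtain ⟨k, hk⟩ := exists_pow_lt_of_lt_one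
      (show (0:ℝ) < δ * ε / ((M + 1) * B) by positivity) hρ
    have hk2 : (B / (B + ε)) ^ (2 * k) ≤ (B / (B + ε)) ^ k :=
      pow_le_pow_of_le_one hρ0 (le_of_lt hρ) (by omega)
    set c2 : ℝ := (M + 1) / (ε * (B + ε) ^ (2 * k)) with hc2def
    have hc2pos : 0 < c2 := by positivity
    have hmain : c2 * B ^ (2 * k) * B < δ := by
      have hBε : (0:ℝ) < (B + ε) ^ (2 * k) := by positivity
      have h1 : c2 * B ^ (2 * k) * B = (M + 1) * B / ε * (B / (B + ε)) ^ (2 * k) := by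
        rw [hc2def, div_pow]
        field_simp
      rw [h1]
      have h2 : (B / (B + ε)) ^ (2 * k) < δ * ε / ((M + 1) * B) :=
        lt_of_le_of_lt hk2 hk
      have h3 : (M + 1) * B / ε * (B / (B + ε)) ^ (2 * k) <
          (M + 1) * B / ε * (δ * ε / ((M + 1) * B)) := by
        apply mul_lt_mul_of_pos_left h2 (by positivity)
      calc (M + 1) * B / ε * (B / (B + ε)) ^ (2 * k)
          < (M + 1) * B / ε * (δ * ε / ((M + 1) * B)) := h3
        _ = δ := by field_simp
    set c : ℝ := Real.sqrt c2 with hcdef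
    have hcsq : c ^ 2 = c2 := Real.sq_sqrt (le_of_lt hc2pos)
    refine ⟨MvPolynomial.C c * (MvPolynomial.C B - g (Fin.last s)) ^ k, ?_⟩
    intro x hx
    have heval : eval x (f - (MvPolynomial.C c * (MvPolynomial.C B - g (Fin.last s)) ^ k) ^ 2
        * g (Fin.last s)) = F x - c2 * (B - G x) ^ (2 * k) * G x := by
      simp only [map_sub, map_mul, map_pow, eval_C, hFdef, hGdef]
      rw [mul_pow, ← pow_mul, hcsq]
      ring_nf
    rw [heval]
    set t : ℝ := G x with htdef
    have hBt : |t| ≤ B := hBub x hx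
    have habs := abs_le.mp hBt
    by_cases ht : -ε ≤ t
    · have hFδ : δ ≤ F x := hδlb x hx ht
      have hterm : c2 * (B - t) ^ (2 * k) * t < δ := by
        by_cases ht0 : t ≤ 0
        · have : c2 * (B - t) ^ (2 * k) * t ≤ 0 := by
            apply mul_nonpos_of_nonneg_of_nonpos (mul_nonneg hc2pos.le ((even_two_mul k).pow_nonneg _)) ht0
          linarith
        · push_neg at ht0
          have h1 : (B - t) ^ (2 * k) ≤ B ^ (2 * k) := by
            apply pow_le_pow_left₀ (by linarith) (by linarith)
          have h2 : c2 * (B - t) ^ (2 * k) * t ≤ c2 * B ^ (2 * k) * B := by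
            apply mul_le_mul
            · exact mul_le_mul_of_nonneg_left h1 (le_of_lt hc2pos)
            · linarith
            · linarith
            · positivity
          linarith
      linarith
    · push_neg at ht
      have hFM : -M ≤ F x := hMlb x hx
      have h1 : (B + ε) ^ (2 * k) ≤ (B - t) ^ (2 * k) := by
        apply pow_le_pow_left₀ (by positivity) (by linarith)
      have h2 : c2 * (B + ε) ^ (2 * k) * ε ≤ c2 * (B - t) ^ (2 * k) * (-t) := by
        apply mul_le_mul
        · exact mul_le_mul_of_nonneg_left h1 (le_of_lt hc2pos)
        · linarith
        · linarith
        · exact mul_nonneg hc2pos.le ((even_two_mul k).pow_nonneg _)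
      have h3 : c2 * (B + ε) ^ (2 * k) * ε = M + 1 := by
        rw [hc2def]
        field_simp
      have : c2 * (B - t) ^ (2 * k) * t ≤ -(M + 1) := by nlinarith
      linarith
  constructor
  · intro f hf
    obtain ⟨r, hr⟩ := key f hf
    obtain ⟨σ₀, τ, hσ₀, hτ, heq⟩ := hput (f - r ^ 2 * g (Fin.last s)) (fun x hx => hr x hx)
    refine ⟨σ₀, Fin.snoc τ (r ^ 2), hσ₀, ?_, ?_⟩
    · intro i
      rcases Fin.eq_castSucc_or_eq_last i with ⟨j, rfl⟩ | rfl
      · simpa using hτ j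
      · simp only [Fin.snoc_last]
        exact ⟨1, fun _ => r, by simp⟩
    · rw [Fin.sum_univ_castSucc]
      simp only [Fin.snoc_castSucc, Fin.snoc_last]
      have : f - r ^ 2 * g (Fin.last s) = σ₀ + ∑ i : Fin s, τ i * g i.castSucc := heq
      linear_combination this
  · intro f hf
    obtain ⟨r, hr⟩ := key f hf
    exact ⟨r, fun x hx => hr x hx⟩
end

section
/- Let N > 0 and S = {N - x_1^2 - ... - x_n^2}. Then every polynomial f ∈ ℝ[x_1,...,x_n] which is strictly positive on the closed ball {x : x_1^2 + ... + x_n^2 ≤ N} can be written as f = σ_0 + σ_1 · (N - x_1^2 - ... - x_n^2) with σ_0, σ_1 sums of squares of polynomials. -/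
open MvPolynomial

namespace PutinarProof

/-! ### Sums of squares basics -/

theorem isSumSq_mul_self_mul {R : Type*} [CommRing R] (x : R) {b : R} (hb : IsSumSq b) :
    IsSumSq (x * x * b) := by
  induction hb with
  | zero => simpa using IsSumSq.zero
  | @sq_add a S pS ih =>
    have h : x * x * (a * a + S) = (x * a) * (x * a) + x * x * S := by ring
    rw [h]; exact IsSumSq.sq_add _ ih

theorem isSumSq_mul {R : Type*} [CommRing R] {a b : R} (ha : IsSumSq a) (hb : IsSumSq b) :
    IsSumSq (a * b) := by
  induction ha with
  | zero => simpa using IsSumSq.zero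
  | @sq_add x S pS ih =>
    have h : (x * x + S) * b = x * x * b + S * b := by ring
    rw [h]; exact (isSumSq_mul_self_mul x hb).add ih

variable {σ : Type*}

theorem isSOS_iff_isSumSq {p : MvPolynomial σ ℝ} : IsSOS p ↔ IsSumSq p := by
  constructor
  · rintro ⟨k, q, rfl⟩
    simpa [sq] using IsSumSq.sum_mul_self (R := MvPolynomial σ ℝ) Finset.univ q
  · intro h
    induction h with
    | zero => exact ⟨0, fun _ => 0, by simp⟩
    | @sq_add a S pS ih =>
      obtain ⟨k, q, rfl⟩ := ih
      exact ⟨k + 1, Fin.cons a q, by simp [Fin.sum_univ_succ, sq]⟩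

theorem sosZero : IsSOS (0 : MvPolynomial σ ℝ) := ⟨0, fun _ => 0, by simp⟩

theorem sosSq (p : MvPolynomial σ ℝ) : IsSOS (p ^ 2) := ⟨1, fun _ => p, by simp⟩

theorem sosAdd {p q : MvPolynomial σ ℝ} (hp : IsSOS p) (hq : IsSOS q) : IsSOS (p + q) :=
  isSOS_iff_isSumSq.2 ((isSOS_iff_isSumSq.1 hp).add (isSOS_iff_isSumSq.1 hq))

theorem sosMul {p q : MvPolynomial σ ℝ} (hp : IsSOS p) (hq : IsSOS q) : IsSOS (p * q) :=
  isSOS_iff_isSumSq.2 (isSumSq_mul (isSOS_iff_isSumSq.1 hp) (isSOS_iff_isSumSq.1 hq))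

theorem sosConst {c : ℝ} (hc : 0 ≤ c) : IsSOS (C c : MvPolynomial σ ℝ) :=
  ⟨1, fun _ => C (Real.sqrt c), by rw [Fin.sum_univ_one, ← map_pow, Real.sq_sqrt hc]⟩

theorem sosOne : IsSOS (1 : MvPolynomial σ ℝ) := by
  simpa using sosConst (σ := σ) zero_le_one

/-! ### The quadratic module / preordering generated by the ball polynomial -/

variable (n : ℕ) (N : ℝ)

/-- The ball polynomial `N - ∑ xᵢ²`. -/
noncomputable def gb : MvPolynomial (Fin n) ℝ := C N - ∑ i, X i ^ 2

/-- The preordering generated by `gb`. -/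
def T0 : Set (MvPolynomial (Fin n) ℝ) :=
  {p | ∃ s0 s1, IsSOS s0 ∧ IsSOS s1 ∧ p = s0 + s1 * gb n N}

variable {n N}

theorem sos_mem {p : MvPolynomial (Fin n) ℝ} (h : IsSOS p) : p ∈ T0 n N :=
  ⟨p, 0, h, sosZero, by ring⟩

theorem gb_mem : gb n N ∈ T0 n N := ⟨0, 1, sosZero, sosOne, by ring⟩

theorem t0_add {p q : MvPolynomial (Fin n) ℝ} (hp : p ∈ T0 n N) (hq : q ∈ T0 n N) :
    p + q ∈ T0 n N := by
  obtain ⟨a, b, ha, hb, rfl⟩ := hp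
  obtain ⟨c, d, hc, hd, rfl⟩ := hq
  exact ⟨a + c, b + d, sosAdd ha hc, sosAdd hb hd, by ring⟩

theorem t0_mul {p q : MvPolynomial (Fin n) ℝ} (hp : p ∈ T0 n N) (hq : q ∈ T0 n N) :
    p * q ∈ T0 n N := by
  obtain ⟨a, b, ha, hb, rfl⟩ := hp
  obtain ⟨c, d, hc, hd, rfl⟩ := hq
  exact ⟨a * c + (b * d) * (gb n N) ^ 2, a * d + b * c,
    sosAdd (sosMul ha hc) (sosMul (sosMul hb hd) (sosSq _)), sosAdd (sosMul ha hd) (sosMul hb hc), by ring⟩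

theorem t0_const {c : ℝ} (hc : 0 ≤ c) : (C c : MvPolynomial (Fin n) ℝ) ∈ T0 n N :=
  sos_mem (sosConst hc)

theorem t0_zero : (0 : MvPolynomial (Fin n) ℝ) ∈ T0 n N := sos_mem sosZero

theorem t0_one : (1 : MvPolynomial (Fin n) ℝ) ∈ T0 n N := sos_mem sosOne

theorem t0_sq (p : MvPolynomial (Fin n) ℝ) : p ^ 2 ∈ T0 n N := sos_mem (sosSq p)

theorem t0_smul {c : ℝ} (hc : 0 ≤ c) {p : MvPolynomial (Fin n) ℝ} (hp : p ∈ T0 n N) :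
    C c * p ∈ T0 n N := t0_mul (t0_const hc) hp

theorem t0_mono_const {k k' : ℝ} {p : MvPolynomial (Fin n) ℝ}
    (h : C k - p ∈ T0 n N) (hk : k ≤ k') : C k' - p ∈ T0 n N := by
  have heq : (C k' - p : MvPolynomial (Fin n) ℝ) = C (k' - k) + (C k - p) := by
    rw [map_sub]; ring
  rw [heq]
  exact t0_add (t0_const (sub_nonneg.2 hk)) h

/-! ### Archimedean property -/

theorem two_c : (2 : MvPolynomial (Fin n) ℝ) = C 2 := (map_ofNat C 2).symm

theorem sos_sum_sq {s : Finset (Fin n)} : IsSOS (∑ j ∈ s, (X j : MvPolynomial (Fin n) ℝ) ^ 2) := by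
  rw [isSOS_iff_isSumSq]
  have h := IsSumSq.sum_mul_self (R := MvPolynomial (Fin n) ℝ) s X
  have heq : ∑ j ∈ s, (X j : MvPolynomial (Fin n) ℝ) * X j
      = ∑ j ∈ s, (X j : MvPolynomial (Fin n) ℝ) ^ 2 := by
    apply Finset.sum_congr rfl; intro j _; ring
  rwa [heq] at h

theorem bdd_X (i : Fin n) :
    ∃ k : ℝ, C k - X i ∈ T0 n N ∧ C k + (X i : MvPolynomial (Fin n) ℝ) ∈ T0 n N := by
  have hsum : ∑ j ∈ Finset.univ.erase i, (X j : MvPolynomial (Fin n) ℝ) ^ 2 + X i ^ 2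
      = ∑ j, X j ^ 2 := Finset.sum_erase_add _ _ (Finset.mem_univ i)
  have hC : (C ((N + 1)/2) : MvPolynomial (Fin n) ℝ) = C (1/2) * C N + C (1/2) := by
    rw [← C_mul, ← map_add]; congr 1; ring
  have hhalf : (0:ℝ) ≤ 1/2 := by norm_num
  have h2c : (C (1/2) : MvPolynomial (Fin n) ℝ) * 2 = 1 := by
    rw [two_c, ← C_mul]; norm_num
  refine ⟨(N + 1) / 2, ?_, ?_⟩
  · refine ⟨C (1/2) * (X i - 1) ^ 2 + C (1/2) * ∑ j ∈ Finset.univ.erase i, X j ^ 2, C (1/2),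
      sosAdd (sosMul (sosConst hhalf) (sosSq _)) (sosMul (sosConst hhalf) sos_sum_sq),
      sosConst hhalf, ?_⟩
    rw [hC, gb, ← hsum]; linear_combination (X i) * h2c
  · refine ⟨C (1/2) * (X i + 1) ^ 2 + C (1/2) * ∑ j ∈ Finset.univ.erase i, X j ^ 2, C (1/2),
      sosAdd (sosMul (sosConst hhalf) (sosSq _)) (sosMul (sosConst hhalf) sos_sum_sq),
      sosConst hhalf, ?_⟩
    rw [hC, gb, ← hsum]; linear_combination (-(X i : MvPolynomial (Fin n) ℝ)) * h2c

theorem bdd_mul {p q : MvPolynomial (Fin n) ℝ} {kp kq : ℝ}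
    (h1 : C kp - p ∈ T0 n N) (h2 : C kp + p ∈ T0 n N)
    (h3 : C kq - q ∈ T0 n N) (h4 : C kq + q ∈ T0 n N) :
    ∃ k : ℝ, C k - p * q ∈ T0 n N ∧ C k + p * q ∈ T0 n N := by
  set a := max kp 0 with ha
  set b := max kq 0 with hb
  have h1' : C a - p ∈ T0 n N := t0_mono_const h1 (le_max_left _ _)
  have h2' : C a + p ∈ T0 n N := by
    have := t0_mono_const (p := -p) (by rw [sub_neg_eq_add]; exact h2) (le_max_left kp 0)
    rwa [sub_neg_eq_add] at this
  have h3' : C b - q ∈ T0 n N := t0_mono_const h3 (le_max_left _ _)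
  have h4' : C b + q ∈ T0 n N := by
    have := t0_mono_const (p := -q) (by rw [sub_neg_eq_add]; exact h4) (le_max_left kq 0)
    rwa [sub_neg_eq_add] at this
  have h2c : (C (1/2) : MvPolynomial (Fin n) ℝ) * 2 = 1 := by
    rw [two_c, ← C_mul]; norm_num
  refine ⟨a * b, ?_, ?_⟩
  · have heq : (C (a * b) : MvPolynomial (Fin n) ℝ) - p * q
        = C (1/2) * ((C a + p) * (C b - q) + (C a - p) * (C b + q)) := by
      rw [C_mul]
      linear_combination (-(C a * C b) + p * q) * h2c
    rw [heq]
    exact t0_smul (by norm_num) (t0_add (t0_mul h2' h3') (t0_mul h1' h4'))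
  · have heq : (C (a * b) : MvPolynomial (Fin n) ℝ) + p * q
        = C (1/2) * ((C a + p) * (C b + q) + (C a - p) * (C b - q)) := by
      rw [C_mul]
      linear_combination (-(C a * C b) - p * q) * h2c
    rw [heq]
    exact t0_smul (by norm_num) (t0_add (t0_mul h2' h4') (t0_mul h1' h3'))

theorem bdd_all (p : MvPolynomial (Fin n) ℝ) :
    ∃ k : ℝ, C k - p ∈ T0 n N ∧ C k + p ∈ T0 n N := by
  induction p using MvPolynomial.induction_on with
  | C c =>
    refine ⟨|c|, ?_, ?_⟩
    · rw [← map_sub]; exact t0_const (sub_nonneg.2 (le_abs_self c))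
    · rw [← map_add]; exact t0_const (by linarith [neg_abs_le c])
  | add p q hp hq =>
    obtain ⟨k1, hk1, hk2⟩ := hp
    obtain ⟨k2, hk3, hk4⟩ := hq
    refine ⟨k1 + k2, ?_, ?_⟩
    · have : (C (k1 + k2) : MvPolynomial (Fin n) ℝ) - (p + q) = (C k1 - p) + (C k2 - q) := by
        rw [map_add]; ring
      rw [this]; exact t0_add hk1 hk3
    · have : (C (k1 + k2) : MvPolynomial (Fin n) ℝ) + (p + q) = (C k1 + p) + (C k2 + q) := by
        rw [map_add]; ring
      rw [this]; exact t0_add hk2 hk4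
  | mul_X p i hp =>
    obtain ⟨k1, hk1, hk2⟩ := hp
    obtain ⟨k2, hk3, hk4⟩ := bdd_X i
    exact bdd_mul hk1 hk2 hk3 hk4

/-! ### Key approximation lemma -/

theorem approx {F t s : MvPolynomial (Fin n) ℝ} (ht : t ∈ T0 n N) (hs : s ∈ T0 n N)
    (hFt : F * t = 1 + s) {d : ℝ} (hd : 0 < d) : F + C d ∈ T0 n N := by
  obtain ⟨k0, hk01, _⟩ := bdd_all (N := N) t
  obtain ⟨k1, hF1, hF2⟩ := bdd_all (N := N) F
  set k : ℝ := max (max k0 k1) 1 with hkdef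
  have hk1' : (1:ℝ) ≤ k := le_max_right _ _
  have hkpos : (0:ℝ) < k := lt_of_lt_of_le one_pos hk1'
  have hkne : k ≠ 0 := ne_of_gt hkpos
  have hk_t : C k - t ∈ T0 n N :=
    t0_mono_const hk01 (le_trans (le_max_left _ _) (le_max_left _ _))
  have hk_Fm : C k - F ∈ T0 n N :=
    t0_mono_const hF1 (le_trans (le_max_right _ _) (le_max_left _ _))
  have hk_Fp : C k + F ∈ T0 n N := by
    have h := t0_mono_const (p := -F) (by rw [sub_neg_eq_add]; exact hF2)
      (le_trans (le_max_right k0 k1) (le_max_left _ 1))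
    rwa [sub_neg_eq_add] at h
  set l : ℝ := k⁻¹ with hldef
  have hlpos : 0 < l := inv_pos.2 hkpos
  set th : ℝ := 1 - l^2 with hthdef
  have hth0 : 0 ≤ th := by
    have : l ≤ 1 := by
      rw [hldef]; exact inv_le_one_of_one_le₀ hk1'
    nlinarith
  have hth1 : th < 1 := by nlinarith
  have hCk : (C l : MvPolynomial (Fin n) ℝ) * C k = 1 := by
    rw [← C_mul, hldef, inv_mul_cancel₀ hkne, map_one]
  set u : MvPolynomial (Fin n) ℝ := C l * (C k - t) with hudef
  have hu_mem : u ∈ T0 n N := t0_smul hlpos.le hk_t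
  -- θ - u ∈ T0
  have hthu_eq : (C th : MvPolynomial (Fin n) ℝ) - u
      = C l * (C l * ((C k - F) * t + s)) := by
    have hCth : (C th : MvPolynomial (Fin n) ℝ) = 1 - C l * C l := by
      rw [hthdef, map_sub, map_one]; rw [← C_mul]; ring_nf
    rw [hudef, hCth]
    linear_combination (C l * C l) * hFt - (1 + C l * t) * hCk
  have hthu_mem : (C th : MvPolynomial (Fin n) ℝ) - u ∈ T0 n N := by
    rw [hthu_eq]
    exact t0_smul hlpos.le (t0_smul hlpos.le (t0_add (t0_mul hk_Fm ht) hs))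
  -- main induction
  have hstep : ∀ p : ℕ, F + C (k * th ^ p) ∈ T0 n N := by
    intro p
    induction p with
    | zero => simpa [add_comm] using hk_Fp
    | succ p ih =>
      have hCC : (C (k * th ^ (p+1)) : MvPolynomial (Fin n) ℝ)
          = C (k * th ^ p) * C th := by rw [← C_mul]; ring_nf
      have key : F + C (k * th ^ (p+1))
          = u * (F + C (k * th ^ p)) + (C l * s + C l + C (k * th ^ p) * (C th - u)) := by
        rw [hCC, hudef]
        linear_combination C l * hFt - F * hCk
      rw [key]
      refine t0_add (t0_mul hu_mem ih)
        (t0_add (t0_add (t0_smul hlpos.le hs) (t0_const hlpos.le))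
          (t0_mul (t0_const (by positivity)) hthu_mem))
  obtain ⟨p, hp⟩ : ∃ p : ℕ, k * th ^ p < d := by
    obtain ⟨p, hp⟩ := exists_pow_lt_of_lt_one (div_pos hd hkpos) hth1
    exact ⟨p, by rwa [← lt_div_iff₀' hkpos]⟩
  have heq : F + C d = (F + C (k * th ^ p)) + C (d - k * th ^ p) := by
    rw [map_sub]; ring
  rw [heq]
  exact t0_add (hstep p) (t0_const (sub_nonneg.2 hp.le))

/-! ### Preorderings and the abstract representation argument -/

/-- A preordering of the polynomial ring: contains all squares, closed under `+` and `*`. -/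
def IsPre (S : Set (MvPolynomial (Fin n) ℝ)) : Prop :=
  (∀ p : MvPolynomial (Fin n) ℝ, p ^ 2 ∈ S) ∧
  (∀ a ∈ S, ∀ b ∈ S, a + b ∈ S) ∧ (∀ a ∈ S, ∀ b ∈ S, a * b ∈ S)

theorem IsPre.zero_mem {S : Set (MvPolynomial (Fin n) ℝ)} (hS : IsPre S) :
    (0 : MvPolynomial (Fin n) ℝ) ∈ S := by
  have := hS.1 0; simpa using this

theorem IsPre.one_mem {S : Set (MvPolynomial (Fin n) ℝ)} (hS : IsPre S) :
    (1 : MvPolynomial (Fin n) ℝ) ∈ S := by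
  have := hS.1 1; simpa using this

theorem IsPre.const_mem {S : Set (MvPolynomial (Fin n) ℝ)} (hS : IsPre S) {c : ℝ} (hc : 0 ≤ c) :
    (C c : MvPolynomial (Fin n) ℝ) ∈ S := by
  have h := hS.1 (C (Real.sqrt c))
  rwa [← map_pow, Real.sq_sqrt hc] at h

theorem IsPre.neg_const_not_mem {S : Set (MvPolynomial (Fin n) ℝ)} (hS : IsPre S)
    (hproper : (-1 : MvPolynomial (Fin n) ℝ) ∉ S) {c : ℝ} (hc : c < 0) :
    (C c : MvPolynomial (Fin n) ℝ) ∉ S := by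
  intro hmem
  have h2 : (C (-c⁻¹) : MvPolynomial (Fin n) ℝ) ∈ S :=
    hS.const_mem (neg_nonneg.2 (inv_nonpos.2 hc.le))
  have h3 := hS.2.2 _ hmem _ h2
  rw [← map_mul] at h3
  have : c * -c⁻¹ = -1 := by
    rw [mul_neg, mul_inv_cancel₀ (ne_of_lt hc)]
  rw [this] at h3
  rw [map_neg, map_one] at h3
  exact hproper h3

/-- From a maximal proper preordering one extracts a point of the ball where
everything in it is nonnegative. -/
theorem exists_point (Q : Set (MvPolynomial (Fin n) ℝ)) (hpre : IsPre Q)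
    (hproper : (-1 : MvPolynomial (Fin n) ℝ) ∉ Q)
    (htot : ∀ a : MvPolynomial (Fin n) ℝ, a ∈ Q ∨ -a ∈ Q)
    (harch : ∀ p : MvPolynomial (Fin n) ℝ, ∃ k : ℝ, C k - p ∈ Q ∧ C k + p ∈ Q) :
    ∃ x : Fin n → ℝ, ∀ p ∈ Q, 0 ≤ eval x p := by
  classical
  have hadd := hpre.2.1
  have hmul := hpre.2.2
  set Sa : MvPolynomial (Fin n) ℝ → Set ℝ := fun a => {r : ℝ | C r - a ∈ Q} with hSa
  have hup : ∀ a r r', r ∈ Sa a → r ≤ r' → r' ∈ Sa a := by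
    intro a r r' hr hle
    have heq : (C r' : MvPolynomial (Fin n) ℝ) - a = C (r' - r) + (C r - a) := by
      rw [map_sub]; ring
    have : (C r' : MvPolynomial (Fin n) ℝ) - a ∈ Q := by
      rw [heq]; exact hadd _ (hpre.const_mem (sub_nonneg.2 hle)) _ hr
    exact this
  have hne : ∀ a, (Sa a).Nonempty := by
    intro a; obtain ⟨k, hk, _⟩ := harch a; exact ⟨k, hk⟩
  have hbdd : ∀ a, BddBelow (Sa a) := by
    intro a
    obtain ⟨k, _, hk2⟩ := harch a
    refine ⟨-k, fun r hr => ?_⟩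
    by_contra hcon
    push_neg at hcon
    have hsum : (C (r + k) : MvPolynomial (Fin n) ℝ) ∈ Q := by
      have heq : (C (r + k) : MvPolynomial (Fin n) ℝ) = (C r - a) + (C k + a) := by
        rw [map_add]; ring
      rw [heq]; exact hadd _ hr _ hk2
    exact hpre.neg_const_not_mem hproper (by linarith) hsum
  set al : MvPolynomial (Fin n) ℝ → ℝ := fun a => sInf (Sa a) with hal
  have hal_le : ∀ a r, r ∈ Sa a → al a ≤ r := fun a r h => csInf_le (hbdd a) h
  have hmem_eps : ∀ a, ∀ e : ℝ, 0 < e → al a + e ∈ Sa a := by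
    intro a e he
    by_contra hcon
    have hlb : ∀ r ∈ Sa a, al a + e ≤ r := by
      intro r hr
      by_contra hlt
      push_neg at hlt
      exact hcon (hup a r _ hr hlt.le)
    have := le_csInf (hne a) hlb
    linarith
  have hal_nonneg : ∀ q ∈ Q, 0 ≤ al q := by
    intro q hq
    refine le_csInf (hne q) ?_
    intro r hr
    by_contra hcon
    push_neg at hcon
    have : (C r : MvPolynomial (Fin n) ℝ) ∈ Q := by
      have heq : (C r : MvPolynomial (Fin n) ℝ) = (C r - q) + q := by ring
      rw [heq]; exact hadd _ hr _ hq
    exact hpre.neg_const_not_mem hproper hcon this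
  have hnotmem : ∀ a r, r < al a → a - C r ∈ Q := by
    intro a r hr
    have h1 : (C r : MvPolynomial (Fin n) ℝ) - a ∉ Q := fun h => absurd (hal_le a r h) (by linarith)
    rcases htot (C r - a) with h | h
    · exact absurd h h1
    · rwa [neg_sub] at h
  have heps : ∀ a b : ℝ, (∀ e : ℝ, 0 < e → a ≤ b + e) → a ≤ b := by
    intro a b h
    by_contra hcon
    push_neg at hcon
    have := h ((a - b)/2) (by linarith)
    linarith
  have hal_const : ∀ c : ℝ, al (C c) = c := by
    intro c
    have h1 : Sa (C c) = Set.Ici c := by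
      ext r
      simp only [hSa, Set.mem_setOf_eq, Set.mem_Ici, ← map_sub]
      constructor
      · intro h
        by_contra hcon
        push_neg at hcon
        exact hpre.neg_const_not_mem hproper (by linarith) h
      · intro h
        exact hpre.const_mem (by linarith)
    show sInf (Sa (C c)) = c
    rw [h1]
    exact csInf_Ici
  have hal_add_le : ∀ a b, al (a + b) ≤ al a + al b := by
    intro a b
    refine heps _ _ fun e he => ?_
    have h1 := hmem_eps a (e/2) (by linarith)
    have h2 := hmem_eps b (e/2) (by linarith)
    have hsum : al a + e/2 + (al b + e/2) ∈ Sa (a + b) := by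
      have heq : (C (al a + e/2 + (al b + e/2)) : MvPolynomial (Fin n) ℝ) - (a + b)
          = (C (al a + e/2) - a) + (C (al b + e/2) - b) := by
        rw [map_add]; ring
      show (C (al a + e/2 + (al b + e/2)) : MvPolynomial (Fin n) ℝ) - (a + b) ∈ Q
      rw [heq]; exact hadd _ h1 _ h2
    have := hal_le _ _ hsum
    linarith
  have hal_neg : ∀ a, al (-a) = -al a := by
    intro a
    have hle : al (-a) ≤ -al a := by
      refine heps _ _ fun e he => ?_
      have h1 : a - C (al a - e) ∈ Q := hnotmem a _ (by linarith)
      have h2 : -(al a - e) ∈ Sa (-a) := by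
        show (C (-(al a - e)) : MvPolynomial (Fin n) ℝ) - (-a) ∈ Q
        have heq : (C (-(al a - e)) : MvPolynomial (Fin n) ℝ) - (-a) = a - C (al a - e) := by
          rw [map_neg]; ring
        rw [heq]; exact h1
      have := hal_le _ _ h2
      linarith
    have hge : -al a ≤ al (-a) := by
      have h0 : ∀ e : ℝ, 0 < e → -(al a + al (-a)) ≤ e := by
        intro e he
        have h1 := hmem_eps a (e/2) (by linarith)
        have h2 := hmem_eps (-a) (e/2) (by linarith)
        have hsum : (C (al a + e/2 + (al (-a) + e/2)) : MvPolynomial (Fin n) ℝ) ∈ Q := by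
          have heq : (C (al a + e/2 + (al (-a) + e/2)) : MvPolynomial (Fin n) ℝ)
              = (C (al a + e/2) - a) + (C (al (-a) + e/2) - (-a)) := by
            rw [map_add]; ring
          rw [heq]; exact hadd _ h1 _ h2
        by_contra hcon
        push_neg at hcon
        exact hpre.neg_const_not_mem hproper (by linarith) hsum
      have := heps _ _ (fun e he => by linarith [h0 e he] : ∀ e : ℝ, 0 < e → -(al a + al (-a)) ≤ 0 + e)
      linarith
    linarith
  have hal_add : ∀ a b, al (a + b) = al a + al b := by
    intro a b
    refine le_antisymm (hal_add_le a b) ?_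
    have h1 : al a ≤ al (a + b) + al (-b) := by
      have heq : a = (a + b) + (-b) := by ring
      calc al a = al ((a + b) + (-b)) := by rw [← heq]
        _ ≤ al (a + b) + al (-b) := hal_add_le _ _
    rw [hal_neg] at h1
    linarith
  have hsmul_le : ∀ c : ℝ, 0 < c → ∀ a, al (C c * a) ≤ c * al a := by
    intro c hc a
    refine heps _ _ fun e he => ?_
    have h1 := hmem_eps a (e/c) (by positivity)
    have h2 : c * (al a + e/c) ∈ Sa (C c * a) := by
      show (C (c * (al a + e/c)) : MvPolynomial (Fin n) ℝ) - C c * a ∈ Q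
      have heq : (C (c * (al a + e/c)) : MvPolynomial (Fin n) ℝ) - C c * a
          = C c * (C (al a + e/c) - a) := by
        rw [map_mul]; ring
      rw [heq]; exact hmul _ (hpre.const_mem hc.le) _ h1
    have h3 := hal_le _ _ h2
    have heq2 : c * (al a + e/c) = c * al a + e := by field_simp
    rw [heq2] at h3
    linarith
  have hal_smul : ∀ c : ℝ, 0 < c → ∀ a, al (C c * a) = c * al a := by
    intro c hc a
    refine le_antisymm (hsmul_le c hc a) ?_
    have h1 := hsmul_le c⁻¹ (by positivity) (C c * a)
    have heq : (C c⁻¹ : MvPolynomial (Fin n) ℝ) * (C c * a) = a := by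
      rw [← mul_assoc, ← map_mul, inv_mul_cancel₀ (ne_of_gt hc), map_one, one_mul]
    rw [heq] at h1
    have h2 : c * al a ≤ c * (c⁻¹ * al (C c * a)) := by
      apply mul_le_mul_of_nonneg_left h1 hc.le
    rwa [← mul_assoc, mul_inv_cancel₀ (ne_of_gt hc), one_mul] at h2
  have hmem_of_pos : ∀ a, 0 < al a → a ∈ Q := by
    intro a ha
    rcases htot a with h | h
    · exact h
    · exfalso
      have h0 : (0:ℝ) ∈ Sa a := by
        show (C (0:ℝ) : MvPolynomial (Fin n) ℝ) - a ∈ Q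
        rw [map_zero, zero_sub]; exact h
      have := hal_le a 0 h0
      linarith
  have hal_mul_pos : ∀ a b, 0 < al a → 0 < al b → al (a * b) = al a * al b := by
    intro a b ha hb
    have haQ : a ∈ Q := hmem_of_pos a ha
    have hbQ : b ∈ Q := hmem_of_pos b hb
    have hle : al (a * b) ≤ al a * al b := by
      refine heps _ _ fun e he => ?_
      set e' : ℝ := min 1 (e / (al a + al b + 1)) with he'
      have he'pos : 0 < e' := by
        apply lt_min one_pos
        positivity
      have h1 := hmem_eps a e' he'pos
      have h2 := hmem_eps b e' he'pos
      have hmemab : (al a + e') * (al b + e') ∈ Sa (a * b) := by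
        show (C ((al a + e') * (al b + e')) : MvPolynomial (Fin n) ℝ) - a * b ∈ Q
        have heq : (C ((al a + e') * (al b + e')) : MvPolynomial (Fin n) ℝ) - a * b
            = (C (al a + e') - a) * b + C (al a + e') * (C (al b + e') - b) := by
          rw [map_mul]; ring
        rw [heq]
        exact hadd _ (hmul _ h1 _ hbQ) _ (hmul _ (hpre.const_mem (by linarith)) _ h2)
      have h3 := hal_le _ _ hmemab
      have he'le : e' ≤ e / (al a + al b + 1) := min_le_right _ _
      have he'le1 : e' ≤ 1 := min_le_left _ _
      have hh : e' * (al a + al b + 1) ≤ e := by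
        rw [← le_div_iff₀ (by positivity)]; exact he'le
      nlinarith
    have hge : al a * al b ≤ al (a * b) := by
      refine heps _ _ fun e he => ?_
      set e' : ℝ := min 1 (min e (min (al a / 2) (al b / 2))) with he'
      have he'pos : 0 < e' := by
        refine lt_min one_pos (lt_min he (lt_min (by linarith) (by linarith)))
      have he'a : e' < al a := by
        have : e' ≤ al a / 2 := le_trans (min_le_right _ _) (le_trans (min_le_right _ _) (min_le_left _ _))
        linarith
      have he'b : e' < al b := by
        have : e' ≤ al b / 2 := le_trans (min_le_right _ _) (le_trans (min_le_right _ _) (min_le_right _ _))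
        linarith
      have he'e : e' ≤ e := le_trans (min_le_right _ _) (min_le_left _ _)
      have he'1 : e' ≤ 1 := min_le_left _ _
      set ba : ℝ := al a - e' with hba
      set bb : ℝ := al b - e' with hbb
      have hbapos : 0 < ba := by simp only [hba]; linarith
      have hbbpos : 0 < bb := by simp only [hbb]; linarith
      have h1 : a - C ba ∈ Q := hnotmem a ba (by simp only [hba]; linarith)
      have h2 : b - C bb ∈ Q := hnotmem b bb (by simp only [hbb]; linarith)
      have hq : (a - C ba) * (b - C bb) ∈ Q := hmul _ h1 _ h2
      have hqnn : 0 ≤ al ((a - C ba) * (b - C bb)) := hal_nonneg _ hq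
      have hdecomp : a * b = (a - C ba) * (b - C bb)
          + (C bb * a + (C ba * b + C (-(ba * bb)))) := by
        rw [map_neg, map_mul]; ring
      have halab : al (a * b) = al ((a - C ba) * (b - C bb)) + (bb * al a + (ba * al b + -(ba * bb))) := by
        rw [hdecomp, hal_add, hal_add, hal_add, hal_smul bb hbbpos, hal_smul ba hbapos]
        have : al (C (-(ba * bb))) = -(ba * bb) := hal_const _
        rw [this]
      have hfin : al a * al b - e' * e' ≤ al (a * b) := by
        rw [halab]
        have hexp : bb * al a + (ba * al b + -(ba * bb)) = al a * al b - e' * e' := by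
          simp only [hba, hbb]; ring
        rw [hexp]
        linarith
      have : e' * e' ≤ e := by nlinarith
      linarith
    linarith
  have hal_mul : ∀ a b, al (a * b) = al a * al b := by
    intro a b
    set c : ℝ := |al a| + 1 with hc
    set d : ℝ := |al b| + 1 with hd
    have hcpos : 0 < c := by positivity
    have hdpos : 0 < d := by positivity
    have hac : 0 < al (a + C c) := by
      rw [hal_add, hal_const]
      have := abs_nonneg (al a)
      have := neg_abs_le (al a)
      simp only [hc]; linarith
    have hbd : 0 < al (b + C d) := by
      rw [hal_add, hal_const]
      have := neg_abs_le (al b)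
      simp only [hd]; linarith
    have hmain := hal_mul_pos _ _ hac hbd
    have hexpand : (a + C c) * (b + C d) = a * b + (C d * a + (C c * b + C (c * d))) := by
      rw [map_mul]; ring
    rw [hexpand, hal_add, hal_add, hal_add, hal_smul d hdpos, hal_smul c hcpos, hal_const,
      hal_add, hal_add, hal_const, hal_const] at hmain
    nlinarith [hmain]
  refine ⟨fun i => al (X i), ?_⟩
  have heval : ∀ p : MvPolynomial (Fin n) ℝ, al p = eval (fun i => al (X i)) p := by
    intro p
    induction p using MvPolynomial.induction_on with
    | C c => simp [hal_const]
    | add p q hp hq => rw [hal_add, hp, hq, map_add]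
    | mul_X p i hp => rw [hal_mul, hp, map_mul, eval_X]
  intro p hp
  rw [← heval p]
  exact hal_nonneg p hp

/-! ### The representation theorem -/

theorem represent (g : MvPolynomial (Fin n) ℝ) (e : ℝ) (he : 0 < e)
    (hg : ∀ x : Fin n → ℝ, (∑ i, (x i) ^ 2) ≤ N → e ≤ eval x g) : g ∈ T0 n N := by
  classical
  set F : MvPolynomial (Fin n) ℝ := g - C (e/2) with hFdef
  set T' : Set (MvPolynomial (Fin n) ℝ)
    := {z | ∃ s ∈ T0 n N, ∃ t ∈ T0 n N, z = s - F * t} with hT'def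
  have hT0T' : T0 n N ⊆ T' := fun z hz => ⟨z, hz, 0, t0_zero, by ring⟩
  by_cases himp : (-1 : MvPolynomial (Fin n) ℝ) ∈ T'
  · obtain ⟨s, hs, t, ht, h⟩ := himp
    have hFt : F * t = 1 + s := by linear_combination h
    have happ := approx ht hs hFt (half_pos he)
    have heq : F + C (e/2) = g := by rw [hFdef]; ring
    rwa [heq] at happ
  · -- Zorn's lemma: extend T' to a maximal proper preordering
    set fam : Set (Set (MvPolynomial (Fin n) ℝ))
      := {S | IsPre S ∧ T' ⊆ S ∧ (-1 : MvPolynomial (Fin n) ℝ) ∉ S} with hfam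
    have hT'pre : IsPre T' := by
      refine ⟨?_, ?_, ?_⟩
      · intro p; exact ⟨p ^ 2, t0_sq p, 0, t0_zero, by ring⟩
      · rintro a ⟨s, hs, t, ht, rfl⟩ b ⟨s', hs', t', ht', rfl⟩
        exact ⟨s + s', t0_add hs hs', t + t', t0_add ht ht', by ring⟩
      · rintro a ⟨s, hs, t, ht, rfl⟩ b ⟨s', hs', t', ht', rfl⟩
        refine ⟨s * s' + F ^ 2 * (t * t'), t0_add (t0_mul hs hs')
          (t0_mul (t0_sq F) (t0_mul ht ht')), s * t' + s' * t,
          t0_add (t0_mul hs ht') (t0_mul hs' ht), by ring⟩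
    have hT'fam : T' ∈ fam := ⟨hT'pre, le_refl _, himp⟩
    have hub : ∀ c ⊆ fam, IsChain (· ⊆ ·) c → c.Nonempty →
        ∃ ub ∈ fam, ∀ s ∈ c, s ⊆ ub := by
      intro c hcfam hchain hcne
      obtain ⟨S0, hS0⟩ := hcne
      refine ⟨⋃₀ c, ⟨⟨?_, ?_, ?_⟩, ?_, ?_⟩, fun s hs => Set.subset_sUnion_of_mem hs⟩
      · intro p
        exact ⟨S0, hS0, ((hcfam hS0).1).1 p⟩
      · rintro a ⟨Sa', hSa', ha⟩ b ⟨Sb', hSb', hb⟩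
        rcases hchain.total hSa' hSb' with h | h
        · exact ⟨Sb', hSb', (hcfam hSb').1.2.1 a (h ha) b hb⟩
        · exact ⟨Sa', hSa', (hcfam hSa').1.2.1 a ha b (h hb)⟩
      · rintro a ⟨Sa', hSa', ha⟩ b ⟨Sb', hSb', hb⟩
        rcases hchain.total hSa' hSb' with h | h
        · exact ⟨Sb', hSb', (hcfam hSb').1.2.2 a (h ha) b hb⟩
        · exact ⟨Sa', hSa', (hcfam hSa').1.2.2 a ha b (h hb)⟩
      · exact fun z hz => ⟨S0, hS0, (hcfam hS0).2.1 hz⟩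
      · rintro ⟨S', hS', hmem⟩
        exact (hcfam hS').2.2 hmem
    obtain ⟨Q, hTQ, hQmax⟩ := zorn_subset_nonempty fam hub T' hT'fam
    obtain ⟨⟨hQpre, hQT', hQproper⟩, hQmax'⟩ := hQmax
    -- totality
    have hstep : ∀ b : MvPolynomial (Fin n) ℝ, b ∉ Q →
        ∃ x ∈ Q, ∃ y ∈ Q, (-1 : MvPolynomial (Fin n) ℝ) = x + b * y := by
      intro b hb
      set Qb : Set (MvPolynomial (Fin n) ℝ) := {z | ∃ x ∈ Q, ∃ y ∈ Q, z = x + b * y} with hQb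
      have hpreb : IsPre Qb := by
        refine ⟨?_, ?_, ?_⟩
        · intro p; exact ⟨p ^ 2, hQpre.1 p, 0, hQpre.zero_mem, by ring⟩
        · rintro a ⟨x, hx, y, hy, rfl⟩ a' ⟨x', hx', y', hy', rfl⟩
          exact ⟨x + x', hQpre.2.1 _ hx _ hx', y + y', hQpre.2.1 _ hy _ hy', by ring⟩
        · rintro a ⟨x, hx, y, hy, rfl⟩ a' ⟨x', hx', y', hy', rfl⟩
          refine ⟨x * x' + b ^ 2 * (y * y'), hQpre.2.1 _ (hQpre.2.2 _ hx _ hx') _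
            (hQpre.2.2 _ (hQpre.1 b) _ (hQpre.2.2 _ hy _ hy')), x * y' + x' * y,
            hQpre.2.1 _ (hQpre.2.2 _ hx _ hy') _ (hQpre.2.2 _ hx' _ hy), by ring⟩
      have hsubb : Q ⊆ Qb := fun z hz => ⟨z, hz, 0, hQpre.zero_mem, by ring⟩
      have hbmem : b ∈ Qb := ⟨0, hQpre.zero_mem, 1, hQpre.one_mem, by ring⟩
      by_contra hno
      push_neg at hno
      have hQbfam : Qb ∈ fam := by
        refine ⟨hpreb, hQT'.trans hsubb, ?_⟩
        rintro ⟨x, hx, y, hy, hxy⟩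
        exact hno x hx y hy hxy
      have := hQmax' hQbfam hsubb
      exact hb (this hbmem)
    have htot : ∀ a : MvPolynomial (Fin n) ℝ, a ∈ Q ∨ -a ∈ Q := by
      intro a
      by_contra hcon
      push_neg at hcon
      obtain ⟨ha, hna⟩ := hcon
      obtain ⟨x, hx, y, hy, hxy⟩ := hstep a ha
      obtain ⟨x', hx', y', hy', hxy'⟩ := hstep (-a) hna
      have hkey : (-1 : MvPolynomial (Fin n) ℝ) = x + x' + x * x' + a ^ 2 * (y * y') := by
        linear_combination (1 + x') * hxy - a * y * hxy'
      have hmem : x + x' + x * x' + a ^ 2 * (y * y') ∈ Q := by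
        refine hQpre.2.1 _ (hQpre.2.1 _ (hQpre.2.1 _ hx _ hx') _ (hQpre.2.2 _ hx _ hx')) _
          (hQpre.2.2 _ (hQpre.1 a) _ (hQpre.2.2 _ hy _ hy'))
      rw [← hkey] at hmem
      exact hQproper hmem
    -- Archimedean property transfers to Q
    have harch : ∀ p : MvPolynomial (Fin n) ℝ, ∃ k : ℝ, C k - p ∈ Q ∧ C k + p ∈ Q := by
      intro p
      obtain ⟨k, h1, h2⟩ := bdd_all (N := N) p
      exact ⟨k, hQT' (hT0T' h1), hQT' (hT0T' h2)⟩
    obtain ⟨x, hx⟩ := exists_point Q hQpre hQproper htot harch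
    -- the point lies in the ball
    have hgb : 0 ≤ eval x (gb n N) := hx _ (hQT' (hT0T' gb_mem))
    have hball : (∑ i, (x i) ^ 2) ≤ N := by
      rw [gb] at hgb
      simp only [map_sub, map_sum, eval_C, map_pow, eval_X] at hgb
      linarith
    -- -F ∈ Q, so eval x F ≤ 0; but eval x F ≥ e/2 > 0
    have hnegF : -F ∈ Q := hQT' ⟨0, t0_zero, 1, t0_one, by ring⟩
    have h1 := hx _ hnegF
    rw [map_neg] at h1
    have h2 : eval x F = eval x g - e/2 := by
      rw [hFdef, map_sub, eval_C]
    have h3 := hg x hball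
    rw [h2] at h1
    linarith

end PutinarProof

/-- **Putinar's theorem for the ball**: every polynomial strictly positive on the
closed ball `{x : x_1² + ⋯ + x_n² ≤ N}` lies in the quadratic module generated by
`N - x_1² - ⋯ - x_n²`. -/
theorem putinar_ball (n : ℕ) (N : ℝ) (hN : 0 < N) (f : MvPolynomial (Fin n) ℝ)
    (hf : ∀ x : Fin n → ℝ, (∑ i, (x i) ^ 2) ≤ N → 0 < eval x f) :
    ∃ σ₀ σ₁ : MvPolynomial (Fin n) ℝ, IsSOS σ₀ ∧ IsSOS σ₁ ∧
      f = σ₀ + σ₁ * (C N - ∑ i, (X i : MvPolynomial (Fin n) ℝ) ^ 2) := by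
  classical
  set K : Set (Fin n → ℝ) := {x | ∑ i, (x i) ^ 2 ≤ N} with hK
  have hcont : Continuous fun x : Fin n → ℝ => ∑ i, (x i) ^ 2 := by
    exact continuous_finset_sum _ fun i _ => (continuous_apply i).pow 2
  have hclosed : IsClosed K := isClosed_le hcont continuous_const
  have hsub : K ⊆ Metric.closedBall 0 (Real.sqrt N) := by
    intro x hxK
    rw [Metric.mem_closedBall, dist_zero_right]
    rw [pi_norm_le_iff_of_nonneg (Real.sqrt_nonneg N)]
    intro i
    have h1 : (x i) ^ 2 ≤ ∑ j, (x j) ^ 2 :=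
      Finset.single_le_sum (f := fun j => (x j) ^ 2) (fun j _ => sq_nonneg _) (Finset.mem_univ i)
    have h2 : (x i) ^ 2 ≤ N := le_trans h1 hxK
    calc ‖x i‖ = |x i| := rfl
      _ = Real.sqrt ((x i) ^ 2) := (Real.sqrt_sq_eq_abs _).symm
      _ ≤ Real.sqrt N := Real.sqrt_le_sqrt h2
  have hKc : IsCompact K :=
    Metric.isCompact_of_isClosed_isBounded hclosed (Metric.isBounded_closedBall.subset hsub)
  have hKne : K.Nonempty := ⟨0, by simp [hK, hN.le]⟩
  obtain ⟨x₀, hx₀K, hmin⟩ := hKc.exists_isMinOn hKne (f.continuous_eval).continuousOn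
  have hε : 0 < eval x₀ f := hf x₀ hx₀K
  have hrep := PutinarProof.represent f (eval x₀ f) hε (fun x hx => isMinOn_iff.1 hmin x hx)
  obtain ⟨s0, s1, h0, h1, heq⟩ := hrep
  exact ⟨s0, s1, h0, h1, heq⟩
end
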